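/- If G is a nonabelian subgroup of the orientation-preserving C² diffeomorphisms of [0,1) whose centralizer in that group is nonabelian, then Fix(G) contains a nonempty open interval. -/

import Mathlib

/-- A model for an orientation-preserving C^r diffeomorphism of the half-open
interval [0,1): a permutation of ℝ that is the identity outside [0,1), restricts to a
C^r monotone bijection of [0,1) with C^r inverse. -/
def IsIcoDiff (r : ℕ∞) (g : Equiv.Perm ℝ) : Prop :=
  ContDiffOn ℝ r ⇑g (Set.Ico 0 1) ∧ ContDiffOn ℝ r ⇑g.symm (Set.Ico 0 1) ∧
  Set.BijOn ⇑g (Set.Ico 0 1) (Set.Ico 0 1) ∧ StrictMonoOn ⇑g (Set.Ico 0 1) ∧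
  ∀ x : ℝ, x ∉ Set.Ico (0:ℝ) 1 → g x = x

open Set Filter Topology

theorem Equiv.Perm.apply_inv_self (e : Equiv.Perm ℝ) (x : ℝ) : e (e⁻¹ x) = x :=
  Equiv.apply_symm_apply e x

theorem Equiv.Perm.inv_apply_self (e : Equiv.Perm ℝ) (x : ℝ) : e⁻¹ (e x) = x :=
  Equiv.symm_apply_apply e x


namespace IsIcoDiff

variable {f g : Equiv.Perm ℝ}

lemma outside (h : IsIcoDiff 2 g) {x : ℝ} (hx : x ∉ Set.Ico (0:ℝ) 1) : g x = x :=
  h.2.2.2.2 x hx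

lemma mapsTo (h : IsIcoDiff 2 g) : MapsTo ⇑g (Ico (0:ℝ) 1) (Ico (0:ℝ) 1) :=
  h.2.2.1.mapsTo

lemma one_fix (h : IsIcoDiff 2 g) : g 1 = 1 := h.outside (by simp)

lemma zero_fix (h : IsIcoDiff 2 g) : g 0 = 0 := by
  have h0 : (0:ℝ) ∈ Ico (0:ℝ) 1 := by constructor <;> norm_num
  obtain ⟨x, hx, hgx⟩ := h.2.2.1.2.2 h0
  have h1 : g 0 ≤ g x := by
    rcases eq_or_lt_of_le hx.1 with h' | h'
    · rw [h']
    · exact le_of_lt (h.2.2.2.1 h0 hx h')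
  have h2 : 0 ≤ g 0 := (h.mapsTo h0).1
  rw [hgx] at h1
  linarith

lemma strictMono (h : IsIcoDiff 2 g) : StrictMono ⇑g := by
  intro x y hxy
  rcases lt_or_ge x 0 with hx | hx
  · have hgx : g x = x := h.outside (fun hc => absurd hc.1 (not_le.2 hx))
    rcases lt_or_ge y 0 with hy | hy
    · rw [hgx, h.outside (fun hc => absurd hc.1 (not_le.2 hy))]; exact hxy
    · rcases lt_or_ge y 1 with hy1 | hy1
      · have := (h.mapsTo ⟨hy, hy1⟩).1
        rw [hgx]; linarith
      · rw [hgx, h.outside (fun hc => absurd hc.2 (not_lt.2 hy1))]; exact hxy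
  · rcases lt_or_ge x 1 with hx1 | hx1
    · rcases lt_or_ge y 1 with hy1 | hy1
      · exact h.2.2.2.1 ⟨hx, hx1⟩ ⟨le_trans hx (le_of_lt hxy), hy1⟩ hxy
      · have := (h.mapsTo ⟨hx, hx1⟩).2
        rw [h.outside (fun hc => absurd hc.2 (not_lt.2 hy1))]; linarith
    · rw [h.outside (fun hc => absurd hc.2 (not_lt.2 hx1)),
        h.outside (fun hc => absurd hc.2 (not_lt.2 (le_trans hx1 (le_of_lt hxy))))]
      exact hxy

lemma continuous (h : IsIcoDiff 2 g) : Continuous ⇑g :=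
  h.strictMono.monotone.continuous_of_surjective g.surjective

lemma strictMono_symm (h : IsIcoDiff 2 g) : StrictMono ⇑g.symm := by
  intro x y hxy
  by_contra hc
  push_neg at hc
  have h2 : g (g.symm y) ≤ g (g.symm x) := h.strictMono.monotone hc
  simp only [Equiv.apply_symm_apply] at h2
  linarith

lemma inv (h : IsIcoDiff 2 g) : IsIcoDiff 2 g⁻¹ := by
  have hc : ⇑(g⁻¹) = ⇑g.symm := rfl
  have hc2 : ⇑(g⁻¹).symm = ⇑g := rfl
  refine ⟨by rw [hc]; exact h.2.1, by rw [hc2]; exact h.1, ⟨?_, ?_, ?_⟩,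
    fun x _ y _ hxy => h.strictMono_symm hxy, ?_⟩
  · intro y hy
    obtain ⟨x, hx, hgx⟩ := h.2.2.1.2.2 hy
    have hxx : g⁻¹ y = x := by rw [← hgx]; exact g.symm_apply_apply x
    rw [hxx]; exact hx
  · intro x _ y _ hxy
    exact (Equiv.injective _) hxy
  · intro x hx
    exact ⟨g x, h.mapsTo hx, g.symm_apply_apply x⟩
  · intro x hx
    calc g⁻¹ x = g⁻¹ (g x) := by rw [h.outside hx]
    _ = x := g.inv_apply_self x

lemma mul (hf : IsIcoDiff 2 f) (hg : IsIcoDiff 2 g) : IsIcoDiff 2 (f * g) := by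
  have hc : ⇑(f * g) = ⇑f ∘ ⇑g := rfl
  have hc2 : ⇑(f * g).symm = ⇑g.symm ∘ ⇑f.symm := rfl
  refine ⟨?_, ?_, ?_, ?_, ?_⟩
  · rw [hc]; exact hf.1.comp hg.1 hg.mapsTo
  · rw [hc2]; exact hg.2.1.comp hf.2.1 (hf.inv).mapsTo
  · rw [hc]; exact hf.2.2.1.comp hg.2.2.1
  · intro x hx y hy hxy
    exact hf.strictMono (hg.strictMono hxy)
  · intro x hx
    show f (g x) = x
    rw [hg.outside hx, hf.outside hx]

lemma one : IsIcoDiff 2 (1 : Equiv.Perm ℝ) := by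
  have hc : ⇑(1 : Equiv.Perm ℝ) = id := rfl
  have hc2 : ⇑(1 : Equiv.Perm ℝ).symm = id := rfl
  refine ⟨by rw [hc]; exact contDiffOn_id, by rw [hc2]; exact contDiffOn_id, ?_, ?_, ?_⟩
  · rw [hc]; exact (bijOn_id _)
  · intro x _ y _ hxy; exact hxy
  · intro x _; rfl

lemma pow (h : IsIcoDiff 2 g) (n : ℕ) : IsIcoDiff 2 (g ^ n) := by
  induction n with
  | zero => simpa using one
  | succ n ih => rw [pow_succ]; exact ih.mul h

lemma zpow (h : IsIcoDiff 2 g) (n : ℤ) : IsIcoDiff 2 (g ^ n) := by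
  rcases n with n | n
  · simpa using h.pow n
  · rw [zpow_negSucc]; exact (h.pow (n+1)).inv

lemma hasDeriv (h : IsIcoDiff 2 g) {x : ℝ} (hx : x ∈ Ico (0:ℝ) 1) :
    HasDerivWithinAt ⇑g (derivWithin ⇑g (Ico (0:ℝ) 1) x) (Ico (0:ℝ) 1) x :=
  ((h.1.differentiableOn (by norm_num)) x hx).hasDerivWithinAt

lemma derivWithin_nonneg (h : IsIcoDiff 2 g) {x : ℝ} (hx : x ∈ Ico (0:ℝ) 1) :
    0 ≤ derivWithin ⇑g (Ico (0:ℝ) 1) x := by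
  have hd := hasDerivWithinAt_iff_tendsto_slope.1 (h.hasDeriv hx)
  have hsub : Ioo x 1 ⊆ (Ico (0:ℝ) 1) \ {x} := by
    intro y hy
    exact ⟨⟨le_trans hx.1 (le_of_lt hy.1), hy.2⟩, ne_of_gt hy.1⟩
  have hne : (𝓝[Ioo x 1] x).NeBot := by
    rw [← mem_closure_iff_nhdsWithin_neBot, closure_Ioo (ne_of_lt hx.2)]
    exact ⟨le_refl x, le_of_lt hx.2⟩
  have hd2 : Tendsto (slope (⇑g) x) (𝓝[Ioo x 1] x) (𝓝 (derivWithin ⇑g (Ico (0:ℝ) 1) x)) :=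
    hd.mono_left (nhdsWithin_mono x hsub)
  refine ge_of_tendsto hd2 ?_
  filter_upwards [eventually_mem_nhdsWithin] with y hy
  rw [slope_def_field]
  have h1 : g x < g y := h.strictMono hy.1
  have h2 : x < y := hy.1
  apply div_nonneg <;> linarith

lemma derivWithin_inv_mul (h : IsIcoDiff 2 g) {x : ℝ} (hx : x ∈ Ico (0:ℝ) 1) :
    derivWithin ⇑g.symm (Ico (0:ℝ) 1) (g x) * derivWithin ⇑g (Ico (0:ℝ) 1) x = 1 := by
  have hinv := h.inv
  have hds : HasDerivWithinAt ⇑g.symm (derivWithin ⇑g.symm (Ico (0:ℝ) 1) (g x))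
      (Ico (0:ℝ) 1) (g x) := by
    have := hinv.hasDeriv (h.mapsTo hx)
    exact this
  have hcomp := HasDerivWithinAt.comp x hds (h.hasDeriv hx) h.mapsTo
  have hid : HasDerivWithinAt id
      (derivWithin ⇑g.symm (Ico (0:ℝ) 1) (g x) * derivWithin ⇑g (Ico (0:ℝ) 1) x)
      (Ico (0:ℝ) 1) x :=
    hcomp.congr (fun y _ => (g.symm_apply_apply y).symm) (g.symm_apply_apply x).symm
  have h1 := hid.derivWithin ((uniqueDiffOn_Ico (0:ℝ) 1) x hx)
  have h2 := (hasDerivWithinAt_id x (Ico (0:ℝ) 1)).derivWithin ((uniqueDiffOn_Ico (0:ℝ) 1) x hx)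
  rw [h1] at h2
  exact h2

lemma derivWithin_pos (h : IsIcoDiff 2 g) {x : ℝ} (hx : x ∈ Ico (0:ℝ) 1) :
    0 < derivWithin ⇑g (Ico (0:ℝ) 1) x := by
  rcases eq_or_lt_of_le (h.derivWithin_nonneg hx) with h' | h'
  · exfalso
    have := h.derivWithin_inv_mul hx
    rw [← h'] at this
    norm_num at this
  · exact h'

lemma hasDeriv_pow (h : IsIcoDiff 2 g) (n : ℕ) {x : ℝ} (hx : x ∈ Ico (0:ℝ) 1) :
    HasDerivWithinAt ⇑(g ^ n)
      (∏ k ∈ Finset.range n, derivWithin ⇑g (Ico (0:ℝ) 1) ((g ^ k) x))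
      (Ico (0:ℝ) 1) x := by
  induction n generalizing x with
  | zero =>
    simp only [pow_zero, Finset.range_zero, Finset.prod_empty]
    exact (hasDerivWithinAt_id x _).congr (fun y _ => rfl) rfl
  | succ n ih =>
    have hmul : ⇑(g ^ (n+1)) = ⇑(g ^ n) ∘ ⇑g := by
      rw [pow_succ]; rfl
    rw [hmul]
    have hcomp := HasDerivWithinAt.comp x (ih (h.mapsTo hx)) (h.hasDeriv hx) h.mapsTo
    convert hcomp using 1
    case e'_4 => rfl
    case e'_5 => rfl
    rw [Finset.prod_range_succ']
    have e1 : ∀ k : ℕ, ((g ^ (k+1)) x : ℝ) = (g ^ k) (g x) := by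
      intro k; rw [pow_succ]; rfl
    have e2 : ((g ^ 0) x : ℝ) = x := by rw [pow_zero]; rfl
    rw [e2]
    congr 1


end IsIcoDiff

/-- fixed points are preserved by powers -/
lemma pow_fix (g : Equiv.Perm ℝ) {x : ℝ} (hx : g x = x) (m : ℕ) : (g ^ m) x = x := by
  induction m with
  | zero => rfl
  | succ m ih => rw [pow_succ, Equiv.Perm.mul_apply, hx, ih]

/-- a monotone orbit-like sequence converges to a fixed point -/
lemma tendsto_fix_of_mono (e : Equiv.Perm ℝ) (he : Continuous ⇑e) (v : ℕ → ℝ)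
    (hs : ∀ n, v (n+1) = e (v n)) (hmono : Monotone v) {B : ℝ} (hB : ∀ n, v n ≤ B) :
    ∃ L, Tendsto v atTop (𝓝 L) ∧ e L = L ∧ (∀ n, v n ≤ L) ∧ L ≤ B := by
  have hbdd : BddAbove (range v) := ⟨B, by rintro x ⟨n, rfl⟩; exact hB n⟩
  have ht := tendsto_atTop_ciSup hmono hbdd
  refine ⟨⨆ n, v n, ht, ?_, fun n => le_ciSup hbdd n, ciSup_le hB⟩
  have h1 : Tendsto (fun n => v (n+1)) atTop (𝓝 (⨆ n, v n)) :=
    ht.comp (tendsto_add_atTop_nat 1)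
  have h2 : Tendsto (fun n => e (v n)) atTop (𝓝 (e (⨆ n, v n))) :=
    (he.tendsto _).comp ht
  have h3 : (fun n => v (n+1)) = fun n => e (v n) := funext hs
  rw [h3] at h1
  exact tendsto_nhds_unique h2 h1

lemma tendsto_fix_of_anti (e : Equiv.Perm ℝ) (he : Continuous ⇑e) (v : ℕ → ℝ)
    (hs : ∀ n, v (n+1) = e (v n)) (hanti : Antitone v) {B : ℝ} (hB : ∀ n, B ≤ v n) :
    ∃ L, Tendsto v atTop (𝓝 L) ∧ e L = L ∧ (∀ n, L ≤ v n) ∧ B ≤ L := by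
  have hbdd : BddBelow (range v) := ⟨B, by rintro x ⟨n, rfl⟩; exact hB n⟩
  have ht := tendsto_atTop_ciInf hanti hbdd
  refine ⟨⨅ n, v n, ht, ?_, fun n => ciInf_le hbdd n, le_ciInf hB⟩
  have h1 : Tendsto (fun n => v (n+1)) atTop (𝓝 (⨅ n, v n)) :=
    ht.comp (tendsto_add_atTop_nat 1)
  have h2 : Tendsto (fun n => e (v n)) atTop (𝓝 (e (⨅ n, v n))) :=
    (he.tendsto _).comp ht
  have h3 : (fun n => v (n+1)) = fun n => e (v n) := funext hs
  rw [h3] at h1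
  exact tendsto_nhds_unique h2 h1

/-- a continuous function with no fixed point between two points of opposite displacement
    sign would contradict IVT -/
lemma exists_fix_between {e : Equiv.Perm ℝ} (he : Continuous ⇑e) {s t : ℝ} (hst : s < t)
    (hs : s < e s) (ht : e t < t) : ∃ r ∈ Ioo s t, e r = r := by
  have hcont : ContinuousOn (fun x => e x - x) (Icc s t) :=
    ((he.sub continuous_id).continuousOn)
  have h0 : (0:ℝ) ∈ Ioo (e t - t) (e s - s) := ⟨by linarith, by linarith⟩
  have := intermediate_value_Ioo' (le_of_lt hst) hcont h0
  obtain ⟨r, hr, hr0⟩ := this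
  exact ⟨r, hr, by dsimp at hr0; linarith⟩

theorem kopell (φ g : Equiv.Perm ℝ) (hφ : IsIcoDiff 2 φ) (hg : IsIcoDiff 2 g)
    (hcomm : Commute φ g) (α q p : ℝ) (hα : 0 ≤ α) (hq : q ≤ 1)
    (hφα : φ α = α) (hφq : φ q = q) (hmov : ∀ x ∈ Ioo α q, φ x < x)
    (hp : p ∈ Ioo α q) (hgp : g p = p) :
    ∀ y ∈ Ioo α q, g y = y := by
  have hαq : α < q := lt_trans hp.1 hp.2
  have hα1 : α < 1 := lt_of_lt_of_le hαq hq
  have hIoosub : Ioo α q ⊆ Ico (0:ℝ) 1 := fun x hx =>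
    ⟨le_trans hα (le_of_lt hx.1), lt_of_lt_of_le hx.2 hq⟩
  have hp01 : p ∈ Ico (0:ℝ) 1 := hIoosub hp
  have hα01 : α ∈ Ico (0:ℝ) 1 := ⟨hα, hα1⟩
  have hcommpt : ∀ x, φ (g x) = g (φ x) := fun x => by
    have h1 : (φ * g) x = (g * φ) x := by rw [hcomm]
    simpa using h1
  have hmaps : ∀ x ∈ Ioo α q, φ x ∈ Ioo α q := by
    intro x hx
    constructor
    · have := hφ.strictMono hx.1; rwa [hφα] at this
    · exact lt_trans (hmov x hx) hx.2
  have hmapsinv : ∀ x ∈ Ioo α q, φ⁻¹ x ∈ Ioo α q := by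
    intro x hx
    have hinvα : φ⁻¹ α = α := by
      have h' : φ⁻¹ (φ α) = α := φ.inv_apply_self α
      rwa [hφα] at h'
    have hinvq : φ⁻¹ q = q := by
      have h' : φ⁻¹ (φ q) = q := φ.inv_apply_self q
      rwa [hφq] at h'
    have hsm : StrictMono ⇑(φ⁻¹) := hφ.inv.strictMono
    constructor
    · have := hsm hx.1; rwa [hinvα] at this
    · have := hsm hx.2; rwa [hinvq] at this
  -- the orbit of p
  set X : ℕ → ℝ := fun n => (φ ^ n) p with hXdef
  have hX0 : X 0 = p := rfl
  have hXsucc : ∀ n, X (n+1) = φ (X n) := by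
    intro n
    show (φ ^ (n+1)) p = φ ((φ ^ n) p)
    rw [pow_succ']
    rfl
  have hXmem : ∀ n, X n ∈ Ioo α q := by
    intro n
    induction n with
    | zero => exact hp
    | succ n ih => rw [hXsucc]; exact hmaps _ ih
  have hXanti : StrictAnti X := by
    apply strictAnti_nat_of_succ_lt
    intro n
    rw [hXsucc]
    exact hmov _ (hXmem n)
  have hXlim : Tendsto X atTop (𝓝 α) := by
    obtain ⟨L, hLt, hLfix, hLle, hLB⟩ := tendsto_fix_of_anti φ hφ.continuous X
      (hs := hXsucc) (hanti := hXanti.antitone) (B := α) (fun n => le_of_lt (hXmem n).1)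
    have : L = α := by
      rcases eq_or_lt_of_le hLB with h' | h'
      · exact h'.symm
      · exfalso
        have hLq : L < q := lt_of_le_of_lt (hLle 0) hp.2
        exact absurd hLfix (ne_of_lt (hmov L ⟨h', hLq⟩))
    rwa [this] at hLt
  have hgX : ∀ n, g (X n) = X n := by
    intro n
    induction n with
    | zero => exact hgp
    | succ n ih => rw [hXsucc, ← hcommpt, ih]
  have hgα : g α = α := by
    have h1 : Tendsto (fun n => g (X n)) atTop (𝓝 (g α)) := (hg.continuous.tendsto _).comp hXlim
    have h2 : (fun n => g (X n)) = X := funext hgX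
    rw [h2] at h1
    exact tendsto_nhds_unique h1 hXlim
  have hgmX : ∀ m n, (g ^ m) (X n) = X n := fun m n => pow_fix g (hgX n) m
  have hφp : φ p < p := hmov p hp
  have hX1 : X 1 = φ p := by rw [hXsucc, hX0]
  have hXmem01 : ∀ n, X n ∈ Ico (0:ℝ) 1 := fun n => hIoosub (hXmem n)
  -- fundamental compact intervals
  have hIccsub : Icc α p ⊆ Ico (0:ℝ) 1 := fun x hx => ⟨le_trans hα hx.1, lt_of_le_of_lt hx.2 hp01.2⟩
  have hKsub : Icc (φ p) p ⊆ Icc α p := fun x hx => ⟨le_trans (le_of_lt (hmaps p hp).1) hx.1, hx.2⟩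
  -- derivative of φ
  set φ' : ℝ → ℝ := derivWithin ⇑φ (Ico (0:ℝ) 1) with hφ'def
  have hU : UniqueDiffOn ℝ (Ico (0:ℝ) 1) := uniqueDiffOn_Ico 0 1
  have hφ'pos : ∀ x ∈ Ico (0:ℝ) 1, 0 < φ' x := fun x hx => hφ.derivWithin_pos hx
  have hC1 : ContDiffOn ℝ 1 φ' (Ico (0:ℝ) 1) := hφ.1.derivWithin hU (by norm_num)
  have hφ''cont : ContinuousOn (derivWithin φ' (Ico (0:ℝ) 1)) (Ico (0:ℝ) 1) :=
    hC1.continuousOn_derivWithin hU (by norm_num)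
  have hφ'cont : ContinuousOn φ' (Ico (0:ℝ) 1) := hC1.continuousOn
  obtain ⟨M, hM⟩ : ∃ M, ∀ x ∈ Icc α p, |derivWithin φ' (Ico (0:ℝ) 1) x / φ' x| ≤ M := by
    have hcont : ContinuousOn (fun x => derivWithin φ' (Ico (0:ℝ) 1) x / φ' x) (Icc α p) :=
      (hφ''cont.mono hIccsub).div (hφ'cont.mono hIccsub)
        (fun x hx => ne_of_gt (hφ'pos x (hIccsub hx)))
    obtain ⟨C, hC⟩ := (isCompact_Icc).exists_bound_of_continuousOn hcont
    exact ⟨C, fun x hx => by rw [← Real.norm_eq_abs]; exact hC x hx⟩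
  set M' := max M 0 with hM'def
  have hM'0 : 0 ≤ M' := le_max_right _ _
  have hψlip : ∀ x ∈ Icc α p, ∀ y ∈ Icc α p,
      |Real.log (φ' y) - Real.log (φ' x)| ≤ M' * |y - x| := by
    intro x hx y hy
    have hd : ∀ z ∈ Icc α p, HasDerivWithinAt (fun t => Real.log (φ' t))
        (derivWithin φ' (Ico (0:ℝ) 1) z / φ' z) (Icc α p) z := by
      intro z hz
      have h1 : HasDerivWithinAt φ' (derivWithin φ' (Ico (0:ℝ) 1) z) (Ico (0:ℝ) 1) z :=
        ((hC1.differentiableOn one_ne_zero) z (hIccsub hz)).hasDerivWithinAt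
      exact (h1.mono hIccsub).log (ne_of_gt (hφ'pos z (hIccsub hz)))
    have hbd : ∀ z ∈ Icc α p, ‖derivWithin φ' (Ico (0:ℝ) 1) z / φ' z‖ ≤ M' := fun z hz => by
      rw [Real.norm_eq_abs]; exact le_trans (hM z hz) (le_max_left _ _)
    have := Convex.norm_image_sub_le_of_norm_hasDerivWithin_le hd hbd (convex_Icc α p) hx hy
    simpa [Real.norm_eq_abs] using this
  set Dn : ℕ → ℝ → ℝ := fun n x => ∏ k ∈ Finset.range n, φ' ((φ ^ k) x) with hDdef
  have hDpos : ∀ n, ∀ x ∈ Ico (0:ℝ) 1, 0 < Dn n x := by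
    intro n x hx
    apply Finset.prod_pos
    intro k _
    exact hφ'pos _ ((hφ.pow k).mapsTo hx)
  have hpowφp : ∀ k : ℕ, ((φ ^ k) (φ p) : ℝ) = X (k+1) := by
    intro k
    show _ = (φ ^ (k+1)) p
    rw [pow_succ]
    rfl
  have hiter : ∀ (k : ℕ), ∀ x ∈ Icc (φ p) p, (φ ^ k) x ∈ Icc (X (k+1)) (X k) := by
    intro k x hx
    have hmono := (hφ.pow k).strictMono.monotone
    constructor
    · have h1 := hmono hx.1
      rwa [hpowφp k] at h1
    · exact hmono hx.2
  have hiterIcc : ∀ (k : ℕ), ∀ x ∈ Icc (φ p) p, (φ ^ k) x ∈ Icc α p := by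
    intro k x hx
    have h1 := hiter k x hx
    have h2 := (hXmem (k+1)).1
    have h3 : X k ≤ X 0 := hXanti.antitone (Nat.zero_le k)
    rw [hX0] at h3
    exact ⟨le_trans (le_of_lt h2) h1.1, le_trans h1.2 h3⟩
  have hlogD : ∀ (n : ℕ), ∀ x ∈ Icc (φ p) p,
      Real.log (Dn n x) = ∑ k ∈ Finset.range n, Real.log (φ' ((φ ^ k) x)) := by
    intro n x hx
    exact Real.log_prod (fun k _ => ne_of_gt (hφ'pos _ (hIccsub (hiterIcc k x hx))))
  have hsum : ∀ (n : ℕ), ∀ x ∈ Icc (φ p) p, ∀ y ∈ Icc (φ p) p,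
      |Real.log (Dn n x) - Real.log (Dn n y)| ≤ M' * (p - α) := by
    intro n x hx y hy
    rw [hlogD n x hx, hlogD n y hy, ← Finset.sum_sub_distrib]
    refine le_trans (Finset.abs_sum_le_sum_abs _ _) ?_
    have hterm : ∀ k ∈ Finset.range n,
        |Real.log (φ' ((φ ^ k) x)) - Real.log (φ' ((φ ^ k) y))| ≤ M' * (X k - X (k+1)) := by
      intro k _
      refine le_trans (hψlip _ (hiterIcc k y hy) _ (hiterIcc k x hx)) ?_
      apply mul_le_mul_of_nonneg_left _ hM'0
      have h1 := hiter k x hx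
      have h2 := hiter k y hy
      rw [abs_le]
      constructor
      · linarith [h1.1, h2.2]
      · linarith [h1.2, h2.1]
    refine le_trans (Finset.sum_le_sum hterm) ?_
    rw [← Finset.mul_sum]
    apply mul_le_mul_of_nonneg_left _ hM'0
    rw [Finset.sum_range_sub' X n, hX0]
    linarith [(hXmem n).1]
  set CC := Real.exp (M' * (p - α)) with hCCdef
  have hCC1 : 1 ≤ CC := Real.one_le_exp (mul_nonneg hM'0 (by linarith [hp.1]))
  have hCC0 : 0 < CC := lt_of_lt_of_le one_pos hCC1
  have hratio : ∀ (n : ℕ), ∀ x ∈ Icc (φ p) p, ∀ y ∈ Icc (φ p) p, Dn n x ≤ CC * Dn n y := by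
    intro n x hx y hy
    have hpx := hDpos n x (hIccsub (hKsub hx))
    have hpy := hDpos n y (hIccsub (hKsub hy))
    have h2 : Real.log (Dn n x) - Real.log (Dn n y) ≤ M' * (p - α) :=
      le_trans (le_abs_self _) (hsum n x hx y hy)
    calc Dn n x = Real.exp (Real.log (Dn n x)) := (Real.exp_log hpx).symm
    _ = Real.exp (Real.log (Dn n x) - Real.log (Dn n y)) * Real.exp (Real.log (Dn n y)) := by
        rw [← Real.exp_add]; ring_nf
    _ ≤ CC * Dn n y := by
        rw [Real.exp_log hpy]
        exact mul_le_mul_of_nonneg_right (Real.exp_le_exp.2 h2) (le_of_lt hpy)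
  -- uniform bounds on derivatives of powers of g on the fundamental domain
  have hGbound : ∀ m : ℕ, ∀ x ∈ Icc (φ p) p,
      CC⁻¹ ≤ derivWithin ⇑(g ^ m) (Ico (0:ℝ) 1) x ∧
        derivWithin ⇑(g ^ m) (Ico (0:ℝ) 1) x ≤ CC := by
    intro m
    set G' : ℝ → ℝ := derivWithin ⇑(g ^ m) (Ico (0:ℝ) 1) with hG'def
    have hgm := hg.pow m
    have hG'pos : ∀ x ∈ Ico (0:ℝ) 1, 0 < G' x := fun x hx => hgm.derivWithin_pos hx
    have hG'cont : ContinuousOn G' (Ico (0:ℝ) 1) := hgm.1.continuousOn_derivWithin hU (by norm_num)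
    have hξ : ∀ n : ℕ, ∃ ξ ∈ Ioo (X (n+1)) (X n), G' ξ = 1 := by
      intro n
      have hlt : X (n+1) < X n := hXanti (Nat.lt_succ_self n)
      have hco : ContinuousOn ⇑(g ^ m) (Icc (X (n+1)) (X n)) := hgm.continuous.continuousOn
      have hsubo : Ioo (X (n+1)) (X n) ⊆ Ioo (0:ℝ) 1 := fun t ht =>
        ⟨lt_of_le_of_lt (hXmem01 (n+1)).1 ht.1, lt_trans ht.2 (hXmem01 n).2⟩
      have hdiff : ∀ x ∈ Ioo (X (n+1)) (X n), HasDerivAt ⇑(g ^ m) (deriv ⇑(g ^ m) x) x := by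
        intro x hx
        have hd : DifferentiableOn ℝ ⇑(g ^ m) (Ioo (0:ℝ) 1) :=
          (hgm.1.differentiableOn (by norm_num)).mono Ioo_subset_Ico_self
        exact (hd.differentiableAt (isOpen_Ioo.mem_nhds (hsubo hx))).hasDerivAt
      obtain ⟨ξ, hξmem, hξeq⟩ := exists_hasDerivAt_eq_slope ⇑(g ^ m) _ hlt hco hdiff
      refine ⟨ξ, hξmem, ?_⟩
      have hIcoN : Ico (0:ℝ) 1 ∈ 𝓝 ξ :=
        mem_of_superset (isOpen_Ioo.mem_nhds (hsubo hξmem)) Ioo_subset_Ico_self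
      rw [hG'def, derivWithin_of_mem_nhds hIcoN, hξeq, hgmX m n, hgmX m (n+1)]
      exact div_self (ne_of_gt (sub_pos.2 hlt))
    have hG'α : G' α = 1 := by
      choose ξ hξmem hξval using hξ
      have hξtend : Tendsto ξ atTop (𝓝 α) := by
        have h1 : Tendsto (fun n => X (n+1)) atTop (𝓝 α) := hXlim.comp (tendsto_add_atTop_nat 1)
        exact tendsto_of_tendsto_of_tendsto_of_le_of_le h1 hXlim
          (fun n => le_of_lt (hξmem n).1) (fun n => le_of_lt (hξmem n).2)
      have hξmem01 : ∀ n, ξ n ∈ Ico (0:ℝ) 1 := fun n =>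
        ⟨le_trans (hXmem01 (n+1)).1 (le_of_lt (hξmem n).1), lt_trans (hξmem n).2 (hXmem01 n).2⟩
      have h2 : Tendsto (fun n => G' (ξ n)) atTop (𝓝 (G' α)) := by
        apply ((hG'cont.continuousWithinAt hα01).tendsto).comp
        rw [tendsto_nhdsWithin_iff]
        exact ⟨hξtend, Eventually.of_forall hξmem01⟩
      have h3 : (fun n => G' (ξ n)) = fun _ => 1 := funext hξval
      rw [h3] at h2
      exact (tendsto_nhds_unique h2 tendsto_const_nhds)
    intro x hx
    have hx01 : x ∈ Ico (0:ℝ) 1 := hIccsub (hKsub hx)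
    have hgmfixφp : ((g ^ m) (φ p) : ℝ) = φ p := by rw [← hX1]; exact hgmX m 1
    have hgmfixp : ((g ^ m) p : ℝ) = p := by rw [← hX0]; exact hgmX m 0
    have hgmx : (g ^ m) x ∈ Icc (φ p) p := by
      constructor
      · have h1 := hgm.strictMono.monotone hx.1
        rwa [hgmfixφp] at h1
      · have h1 := hgm.strictMono.monotone hx.2
        rwa [hgmfixp] at h1
    have hgmx01 : (g ^ m) x ∈ Ico (0:ℝ) 1 := hIccsub (hKsub hgmx)
    have hkey : ∀ n : ℕ, G' x * Dn n ((g ^ m) x) = G' ((φ ^ n) x) * Dn n x := by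
      intro n
      have h1 : HasDerivWithinAt (⇑(g ^ m) ∘ ⇑(φ ^ n)) (G' ((φ ^ n) x) * Dn n x)
          (Ico (0:ℝ) 1) x :=
        HasDerivWithinAt.comp x (hgm.hasDeriv ((hφ.pow n).mapsTo hx01)) (hφ.hasDeriv_pow n hx01)
          (hφ.pow n).mapsTo
      have h2 : HasDerivWithinAt (⇑(φ ^ n) ∘ ⇑(g ^ m)) (Dn n ((g ^ m) x) * G' x)
          (Ico (0:ℝ) 1) x :=
        HasDerivWithinAt.comp x (hφ.hasDeriv_pow n hgmx01) (hgm.hasDeriv hx01) hgm.mapsTo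
      have hfun : ⇑(g ^ m) ∘ ⇑(φ ^ n) = ⇑(φ ^ n) ∘ ⇑(g ^ m) := by
        have hc : (g ^ m) * (φ ^ n) = (φ ^ n) * (g ^ m) := (hcomm.symm.pow_pow m n)
        funext t
        show ((g ^ m) * (φ ^ n)) t = ((φ ^ n) * (g ^ m)) t
        rw [hc]
      rw [hfun] at h1
      have e1 := h1.derivWithin (hU x hx01)
      have e2 := h2.derivWithin (hU x hx01)
      rw [e1] at e2
      rw [mul_comm (G' x) (Dn n ((g ^ m) x))]
      exact e2.symm
    have hφnIcc : ∀ n : ℕ, (φ ^ n) x ∈ Icc α p := fun n => hiterIcc n x hx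
    have hφn01 : ∀ n : ℕ, (φ ^ n) x ∈ Ico (0:ℝ) 1 := fun n => hIccsub (hφnIcc n)
    have hφntend : Tendsto (fun n : ℕ => (φ ^ n) x) atTop (𝓝 α) := by
      have h1 : Tendsto (fun n => X (n+1)) atTop (𝓝 α) := hXlim.comp (tendsto_add_atTop_nat 1)
      exact tendsto_of_tendsto_of_tendsto_of_le_of_le h1 hXlim
        (fun n => (hiter n x hx).1) (fun n => (hiter n x hx).2)
    have hG'tend : Tendsto (fun n : ℕ => G' ((φ ^ n) x)) atTop (𝓝 1) := by
      rw [← hG'α]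
      apply ((hG'cont.continuousWithinAt hα01).tendsto).comp
      rw [tendsto_nhdsWithin_iff]
      exact ⟨hφntend, Eventually.of_forall hφn01⟩
    have hRlim : Tendsto (fun n : ℕ => G' x / G' ((φ ^ n) x)) atTop (𝓝 (G' x)) := by
      have := (tendsto_const_nhds (x := G' x) (f := atTop)).div hG'tend one_ne_zero
      simpa [Pi.div_def] using this
    have hRval : ∀ n : ℕ, G' x / G' ((φ ^ n) x) = Dn n x / Dn n ((g ^ m) x) := by
      intro n
      have hkeyn := hkey n
      have p1 := hG'pos _ (hφn01 n)
      have p2 := hDpos n _ hgmx01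
      field_simp
      linarith [hkeyn]
    have hRb : ∀ n : ℕ, CC⁻¹ ≤ G' x / G' ((φ ^ n) x) ∧ G' x / G' ((φ ^ n) x) ≤ CC := by
      intro n
      have p2 := hDpos n _ hgmx01
      have p3 := hDpos n x hx01
      constructor
      · rw [hRval n, le_div_iff₀ p2, inv_mul_le_iff₀ hCC0]
        exact hratio n _ hgmx x hx
      · rw [hRval n, div_le_iff₀ p2]
        exact hratio n x hx _ hgmx
    constructor
    · exact ge_of_tendsto hRlim (Eventually.of_forall fun n => (hRb n).1)
    · exact le_of_tendsto hRlim (Eventually.of_forall fun n => (hRb n).2)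
  -- Suppose g moves some point y of (α,q); derive a contradiction.
  intro y hy
  by_contra hgy
  -- ℤ-orbit of p
  have hstep : ∀ (n : ℤ) (x : ℝ), (φ ^ (n+1)) x = φ ((φ ^ n) x) := by
    intro n x
    rw [add_comm, zpow_add, zpow_one]
    rfl
  have hstep' : ∀ (n : ℤ) (x : ℝ), (φ ^ (n-1)) x = φ⁻¹ ((φ ^ n) x) := by
    intro n x
    rw [sub_eq_neg_add, zpow_add, zpow_neg_one]
    rfl
  set u : ℤ → ℝ := fun n => (φ ^ n) p with hudef
  have humem : ∀ n : ℤ, u n ∈ Ioo α q := by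
    intro n
    induction n using Int.induction_on with
    | zero => exact hp
    | succ k ih =>
      have : u (k+1) = φ (u k) := hstep k p
      rw [this]; exact hmaps _ ih
    | pred k ih =>
      have : u (-k-1) = φ⁻¹ (u (-k)) := hstep' (-k) p
      rw [this]; exact hmapsinv _ ih
  have huanti : StrictAnti u := by
    apply strictAnti_int_of_succ_lt
    intro n
    show (φ ^ (n+1)) p < (φ ^ n) p
    rw [hstep n p]
    exact hmov _ (humem n)
  have hunat : ∀ n : ℕ, u n = X n := by
    intro n
    show (φ ^ (n:ℤ)) p = (φ ^ n) p
    rw [zpow_natCast]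
  have hulim1 : Tendsto (fun n : ℕ => u n) atTop (𝓝 α) := by
    have : (fun n : ℕ => u n) = X := funext hunat
    rw [this]; exact hXlim
  -- downward orbit tends to q
  set v : ℕ → ℝ := fun n => u (-(n:ℤ)) with hvdef
  have hvsucc : ∀ n : ℕ, v (n+1) = φ⁻¹ (v n) := by
    intro n
    show (φ ^ (-((n+1:ℕ):ℤ))) p = φ⁻¹ ((φ ^ (-(n:ℤ))) p)
    rw [show (-((n+1:ℕ):ℤ)) = -(n:ℤ) - 1 by push_cast; ring]
    exact hstep' (-(n:ℤ)) p
  have hvmono : Monotone v := by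
    apply monotone_nat_of_le_succ
    intro n
    rw [hvsucc n]
    have hmem := humem (-(n:ℤ))
    have h1 := hmapsinv _ hmem
    have h2 := hmov _ h1
    have h3 : φ (φ⁻¹ (v n)) = v n := φ.apply_inv_self (v n)
    rw [h3] at h2
    exact le_of_lt h2
  have hvlim : Tendsto v atTop (𝓝 q) := by
    obtain ⟨L, hLt, hLfix, hLge, hLB⟩ := tendsto_fix_of_mono φ⁻¹ hφ.inv.continuous v hvsucc
      hvmono (B := q) (fun n => le_of_lt (humem _).2)
    have hLq : L = q := by
      rcases eq_or_lt_of_le hLB with h' | h'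
      · exact h'
      · exfalso
        have h0 : u 0 ≤ L := by have h' := hLge 0; rw [hvdef] at h'; simpa using h'
        have hLα : α < L := lt_of_lt_of_le (humem 0).1 h0
        have hφL : φ L = L := by
          have h2 := congrArg (⇑φ) hLfix
          rw [φ.apply_inv_self] at h2
          exact h2.symm
        exact absurd hφL (ne_of_lt (hmov L ⟨hLα, h'⟩))
    rwa [hLq] at hLt
  -- find the fundamental domain translate of y
  obtain ⟨n₀, hn₀1, hn₀2⟩ : ∃ n₀ : ℤ, y < u n₀ ∧ ∀ z : ℤ, y < u z → z ≤ n₀ := by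
    have hex : ∃ z : ℤ, y < u z := by
      obtain ⟨n, hn⟩ := (hvlim.eventually (eventually_gt_nhds hy.2)).exists
      exact ⟨-(n:ℤ), hn⟩
    have hbdd : ∃ b : ℤ, ∀ z : ℤ, y < u z → z ≤ b := by
      obtain ⟨N, hN⟩ := (hulim1.eventually (eventually_lt_nhds hy.1)).exists
      refine ⟨N, fun z hz => ?_⟩
      by_contra hc
      push_neg at hc
      have := huanti.antitone (le_of_lt hc)
      have : u z ≤ u N := this
      linarith
    obtain ⟨n₀, h1, h2⟩ := Int.exists_greatest_of_bdd hbdd hex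
    exact ⟨n₀, h1, h2⟩
  have hu1 : u (n₀ + 1) ≤ y := by
    by_contra hc
    push_neg at hc
    have := hn₀2 _ hc
    omega
  set z := (φ ^ (-n₀)) y with hzdef
  have hzcomp : ∀ (a b : ℤ) (t : ℝ), (φ ^ a) ((φ ^ b) t) = (φ ^ (a+b)) t := by
    intro a b t
    rw [zpow_add]
    rfl
  have hz1 : φ p ≤ z := by
    have h1 := (hφ.zpow (-n₀)).strictMono.monotone hu1
    have h2 : ((φ ^ (-n₀)) (u (n₀+1)) : ℝ) = φ p := by
      show (φ ^ (-n₀)) ((φ ^ (n₀+1)) p) = φ p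
      rw [hzcomp]
      have : -n₀ + (n₀ + 1) = 1 := by ring
      rw [this, zpow_one]
    rwa [h2] at h1
  have hz2 : z < p := by
    have h1 := (hφ.zpow (-n₀)).strictMono hn₀1
    have h2 : ((φ ^ (-n₀)) (u n₀) : ℝ) = p := by
      show (φ ^ (-n₀)) ((φ ^ n₀) p) = p
      rw [hzcomp]
      simp
    rwa [h2] at h1
  have hgz : g z ≠ z := by
    intro hc
    have hcz : Commute (φ ^ (-n₀)) g := hcomm.zpow_left (-n₀)
    have h1 : (φ ^ (-n₀)) (g y) = g ((φ ^ (-n₀)) y) := by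
      show ((φ ^ (-n₀)) * g) y = (g * (φ ^ (-n₀))) y
      rw [hcz]
    rw [← hzdef] at h1
    rw [hc] at h1
    have h2 : g y = y := by
      have := (hφ.zpow (-n₀)).strictMono.injective h1
      exact this
    exact hgy h2
  have hgφp : g (φ p) = φ p := by rw [← hX1]; exact hgX 1
  have hz1' : φ p < z := by
    rcases eq_or_lt_of_le hz1 with h' | h'
    · exact absurd (by rw [← h']; exact hgφp) hgz
    · exact h'
  have hzIoo01 : z ∈ Ioo (0:ℝ) 1 := by
    constructor
    · have := (hXmem 1).1; rw [hX1] at this; linarith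
    · linarith [hp01.2]
  -- the final contradiction, symmetric in the two cases
  have hCCinvpos : 0 < CC⁻¹ := inv_pos.2 hCC0
  have hfinal : ∀ w₁ w₂ : ℝ, φ p ≤ w₁ → w₁ < w₂ → w₂ ≤ p →
      (∃ m : ℕ, ((g ^ m) w₂ - (g ^ m) w₁) / (w₂ - w₁) < CC⁻¹) → False := by
    intro w₁ w₂ hw₁ hw₁₂ hw₂ hsmall
    obtain ⟨m, hm⟩ := hsmall
    have hgm := hg.pow m
    have hco : ContinuousOn ⇑(g ^ m) (Icc w₁ w₂) := hgm.continuous.continuousOn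
    have hsubo : Ioo w₁ w₂ ⊆ Ioo (0:ℝ) 1 := by
      intro t ht
      constructor
      · have h1 := (hXmem 1).1
        rw [hX1] at h1
        linarith [ht.1]
      · linarith [ht.2, hp01.2]
    have hdiff : ∀ t ∈ Ioo w₁ w₂, HasDerivAt ⇑(g ^ m) (deriv ⇑(g ^ m) t) t := by
      intro t ht
      have hd : DifferentiableOn ℝ ⇑(g ^ m) (Ioo (0:ℝ) 1) :=
        (hgm.1.differentiableOn (by norm_num)).mono Ioo_subset_Ico_self
      exact (hd.differentiableAt (isOpen_Ioo.mem_nhds (hsubo ht))).hasDerivAt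
    obtain ⟨ξ, hξmem, hξeq⟩ := exists_hasDerivAt_eq_slope ⇑(g ^ m) _ hw₁₂ hco hdiff
    have hξK : ξ ∈ Icc (φ p) p :=
      ⟨le_trans hw₁ (le_of_lt hξmem.1), le_trans (le_of_lt hξmem.2) hw₂⟩
    have hIcoN : Ico (0:ℝ) 1 ∈ 𝓝 ξ :=
      mem_of_superset (isOpen_Ioo.mem_nhds (hsubo hξmem)) Ioo_subset_Ico_self
    have hlow := (hGbound m ξ hξK).1
    rw [derivWithin_of_mem_nhds hIcoN, hξeq] at hlow
    linarith
  rcases lt_or_gt_of_ne hgz with hlt | hgt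
  · -- g z < z : fixed points accumulate from the left
    set A := {x : ℝ | g x = x} ∩ Icc (φ p) z with hAdef
    have hAclosed : IsClosed A := (isClosed_eq hg.continuous continuous_id).inter isClosed_Icc
    have hAne : A.Nonempty := ⟨φ p, hgφp, le_refl _, le_of_lt hz1'⟩
    have hAbdd : BddAbove A := ⟨z, fun t ht => ht.2.2⟩
    set v₁ := sSup A with hv₁def
    have hv₁ : v₁ ∈ A := hAclosed.csSup_mem hAne hAbdd
    have hv₁z : v₁ < z := lt_of_le_of_ne hv₁.2.2 (fun hc => hgz (hc ▸ hv₁.1))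
    have hnofix : ∀ t, v₁ < t → t ≤ z → g t ≠ t := by
      intro t ht1 ht2 hc
      have : t ∈ A := ⟨hc, le_trans hv₁.2.1 (le_of_lt ht1), ht2⟩
      exact absurd (le_csSup hAbdd this) (not_le.2 ht1)
    have hsign : ∀ t, v₁ < t → t ≤ z → g t < t := by
      intro t ht1 ht2
      rcases lt_trichotomy (g t) t with h' | h' | h'
      · exact h'
      · exact absurd h' (hnofix t ht1 ht2)
      · exfalso
        rcases eq_or_lt_of_le ht2 with h'' | h''
        · rw [h''] at h'; linarith
        · obtain ⟨r, hr, hrfix⟩ := exists_fix_between hg.continuous h'' h' hlt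
          exact hnofix r (lt_trans ht1 hr.1) (le_of_lt hr.2) hrfix
    set zm : ℕ → ℝ := fun m => (g ^ m) z with hzmdef
    have hzmsucc : ∀ m, zm (m+1) = g (zm m) := by
      intro m
      show (g ^ (m+1)) z = g ((g ^ m) z)
      rw [pow_succ']
      rfl
    have hzm_mem : ∀ m, v₁ < zm m ∧ zm m ≤ z := by
      intro m
      induction m with
      | zero => exact ⟨hv₁z, le_refl z⟩
      | succ m ih =>
        constructor
        · rw [hzmsucc]
          have h1 := hg.strictMono ih.1
          rwa [hv₁.1] at h1
        · rw [hzmsucc]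
          exact le_trans (le_of_lt (hsign _ ih.1 ih.2)) ih.2
    have hzmanti : Antitone zm := by
      apply antitone_nat_of_succ_le
      intro m
      rw [hzmsucc]
      exact le_of_lt (hsign _ (hzm_mem m).1 (hzm_mem m).2)
    obtain ⟨L₂, hL₂t, hL₂fix, hL₂le, hL₂B⟩ := tendsto_fix_of_anti g hg.continuous zm hzmsucc
      hzmanti (B := v₁) (fun m => le_of_lt (hzm_mem m).1)
    have hL₂v : L₂ = v₁ := by
      rcases eq_or_lt_of_le hL₂B with h' | h'
      · exact h'.symm
      · exact absurd hL₂fix (hnofix L₂ h' (le_trans (hL₂le 0) (le_refl z)))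
    rw [hL₂v] at hL₂t
    apply hfinal v₁ z hv₁.2.1 hv₁z (le_of_lt hz2)
    have hzv₁ : 0 < z - v₁ := by linarith
    have hev : v₁ < v₁ + CC⁻¹ * (z - v₁) := by
      have := mul_pos hCCinvpos hzv₁
      linarith
    obtain ⟨m, hm⟩ := (hL₂t.eventually (eventually_lt_nhds hev)).exists
    refine ⟨m, ?_⟩
    rw [pow_fix g hv₁.1 m, div_lt_iff₀ hzv₁]
    have : (g ^ m) z = zm m := rfl
    rw [this]
    linarith
  · -- g z > z : fixed points accumulate from the right
    set A := {x : ℝ | g x = x} ∩ Icc z p with hAdef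
    have hAclosed : IsClosed A := (isClosed_eq hg.continuous continuous_id).inter isClosed_Icc
    have hAne : A.Nonempty := ⟨p, hgp, le_of_lt hz2, le_refl _⟩
    have hAbdd : BddBelow A := ⟨z, fun t ht => ht.2.1⟩
    set v₁ := sInf A with hv₁def
    have hv₁ : v₁ ∈ A := hAclosed.csInf_mem hAne hAbdd
    have hv₁z : z < v₁ := lt_of_le_of_ne hv₁.2.1 (fun hc => hgz (hc ▸ hv₁.1))
    have hnofix : ∀ t, z ≤ t → t < v₁ → g t ≠ t := by
      intro t ht1 ht2 hc
      have : t ∈ A := ⟨hc, ht1, le_trans (le_of_lt ht2) hv₁.2.2⟩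
      exact absurd (csInf_le hAbdd this) (not_le.2 ht2)
    have hsign : ∀ t, z ≤ t → t < v₁ → t < g t := by
      intro t ht1 ht2
      rcases lt_trichotomy t (g t) with h' | h' | h'
      · exact h'
      · exact absurd h'.symm (hnofix t ht1 ht2)
      · exfalso
        rcases eq_or_lt_of_le ht1 with h'' | h''
        · rw [← h''] at h'; linarith
        · obtain ⟨r, hr, hrfix⟩ := exists_fix_between hg.continuous h'' hgt h'
          exact hnofix r (le_of_lt hr.1) (lt_trans hr.2 ht2) hrfix
    set zm : ℕ → ℝ := fun m => (g ^ m) z with hzmdef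
    have hzmsucc : ∀ m, zm (m+1) = g (zm m) := by
      intro m
      show (g ^ (m+1)) z = g ((g ^ m) z)
      rw [pow_succ']
      rfl
    have hzm_mem : ∀ m, z ≤ zm m ∧ zm m < v₁ := by
      intro m
      induction m with
      | zero => exact ⟨le_refl z, hv₁z⟩
      | succ m ih =>
        constructor
        · rw [hzmsucc]
          exact le_trans ih.1 (le_of_lt (hsign _ ih.1 ih.2))
        · rw [hzmsucc]
          have h1 := hg.strictMono ih.2
          rwa [hv₁.1] at h1
    have hzmmono : Monotone zm := by
      apply monotone_nat_of_le_succ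
      intro m
      rw [hzmsucc]
      exact le_of_lt (hsign _ (hzm_mem m).1 (hzm_mem m).2)
    obtain ⟨L₂, hL₂t, hL₂fix, hL₂le, hL₂B⟩ := tendsto_fix_of_mono g hg.continuous zm hzmsucc
      hzmmono (B := v₁) (fun m => le_of_lt (hzm_mem m).2)
    have hL₂v : L₂ = v₁ := by
      rcases eq_or_lt_of_le hL₂B with h' | h'
      · exact h'
      · exact absurd hL₂fix (hnofix L₂ (le_trans (le_refl z) (hL₂le 0)) h')
    rw [hL₂v] at hL₂t
    apply hfinal z v₁ hz1 hv₁z hv₁.2.2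
    have hzv₁ : 0 < v₁ - z := by linarith
    have hev : v₁ - CC⁻¹ * (v₁ - z) < v₁ := by
      have := mul_pos hCCinvpos hzv₁
      linarith
    obtain ⟨m, hm⟩ := (hL₂t.eventually (eventually_gt_nhds hev)).exists
    refine ⟨m, ?_⟩
    rw [pow_fix g hv₁.1 m, div_lt_iff₀ hzv₁]
    have : (g ^ m) z = zm m := rfl
    rw [this]
    linarith

/-- Hölder's theorem, concrete form: a group of homeomorphisms of an interval acting
freely (trichotomy property) is abelian. -/
lemma holder_commute (a b : ℝ) (hab : a < b)
    (P : Equiv.Perm ℝ → Prop)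
    (Pmul : ∀ e₁ e₂, P e₁ → P e₂ → P (e₁ * e₂))
    (Pinv : ∀ e, P e → P e⁻¹)
    (Pmono : ∀ e, P e → StrictMono ⇑e)
    (Pcont : ∀ e, P e → Continuous ⇑e)
    (Pmaps : ∀ e, P e → ∀ x ∈ Ioo a b, e x ∈ Ioo a b)
    (Ptri : ∀ e, P e → (∀ x ∈ Ioo a b, e x = x) ∨ (∀ x ∈ Ioo a b, x < e x) ∨
      (∀ x ∈ Ioo a b, e x < x))
    (f h : Equiv.Perm ℝ) (hf : P f) (hh : P h) :
    ∀ x ∈ Ioo a b, f (h x) = h (f x) := by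
  set I := Ioo a b with hIdef
  have hx₀ : (a+b)/2 ∈ I := ⟨by linarith, by linarith⟩
  set x₀ : ℝ := (a+b)/2 with hx₀def
  -- closure under powers
  have Pone : P 1 := by
    have := Pmul f f⁻¹ hf (Pinv f hf)
    rwa [mul_inv_cancel] at this
  have Ppow : ∀ e, P e → ∀ n : ℕ, P (e ^ n) := by
    intro e he n
    induction n with
    | zero => simpa using Pone
    | succ n ih => rw [pow_succ]; exact Pmul _ _ ih he
  have Pzpow : ∀ e, P e → ∀ n : ℤ, P (e ^ n) := by
    intro e he n
    rcases n with n | n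
    · simpa using Ppow e he n
    · rw [zpow_negSucc]; exact Pinv _ (Ppow e he (n+1))
  -- composition of zpowers pointwise
  have hcompz : ∀ (e : Equiv.Perm ℝ) (i j : ℤ) (t : ℝ), (e ^ i) ((e ^ j) t) = (e ^ (i+j)) t := by
    intro e i j t
    rw [zpow_add]
    rfl
  -- comparison trichotomy for two elements
  have cmp : ∀ e₁ e₂, P e₁ → P e₂ →
      (∀ x ∈ I, e₁ x = e₂ x) ∨ (∀ x ∈ I, e₁ x < e₂ x) ∨ (∀ x ∈ I, e₂ x < e₁ x) := by
    intro e₁ e₂ h₁ h₂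
    have hP := Ptri (e₁⁻¹ * e₂) (Pmul _ _ (Pinv _ h₁) h₂)
    have key : ∀ x : ℝ, e₁ ((e₁⁻¹ * e₂) x) = e₂ x := by
      intro x
      show e₁ (e₁⁻¹ (e₂ x)) = e₂ x
      exact e₁.apply_inv_self (e₂ x)
    rcases hP with hc | hc | hc
    · left
      intro x hx
      have h2 := congrArg (⇑e₁) (hc x hx)
      rw [key] at h2
      exact h2.symm
    · right; left
      intro x hx
      have := Pmono e₁ h₁ (hc x hx)
      rwa [key] at this
    · right; right
      intro x hx
      have := Pmono e₁ h₁ (hc x hx)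
      rwa [key] at this
  -- Archimedean property
  have arch : ∀ d, P d → (∀ x ∈ I, x < d x) → ∀ e, P e →
      ∃ m : ℤ, (∀ x ∈ I, (d ^ m) x ≤ e x) ∧ (∀ x ∈ I, e x < (d ^ (m+1)) x) := by
    intro d hd hdpos e he
    have hdinvneg : ∀ x ∈ I, d⁻¹ x < x := by
      intro x hx
      have hmem := Pmaps d⁻¹ (Pinv d hd) x hx
      by_contra hc
      push_neg at hc
      have h1 := (Pmono d hd).monotone hc
      rw [d.apply_inv_self] at h1
      have h2 := hdpos x hx
      linarith
    -- upward orbit tends to b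
    have hup : Tendsto (fun n : ℕ => (d ^ n) x₀) atTop (𝓝 b) := by
      have hmem : ∀ n : ℕ, (d ^ n) x₀ ∈ I := fun n => Pmaps _ (Ppow d hd n) x₀ hx₀
      obtain ⟨L, hLt, hLfix, hLge, hLB⟩ := tendsto_fix_of_mono d (Pcont d hd)
        (fun n => (d ^ n) x₀)
        (fun n => by show (d ^ (n+1)) x₀ = d ((d ^ n) x₀); rw [pow_succ']; rfl)
        (monotone_nat_of_le_succ (fun n => by
          rw [show ((d ^ (n+1)) x₀ : ℝ) = d ((d ^ n) x₀) by rw [pow_succ']; rfl]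
          exact le_of_lt (hdpos _ (hmem n))))
        (B := b) (fun n => le_of_lt (hmem n).2)
      have hLb : L = b := by
        rcases eq_or_lt_of_le hLB with h' | h'
        · exact h'
        · exfalso
          have hLa : a < L := lt_of_lt_of_le (hmem 0).1 (by simpa using hLge 0)
          exact absurd hLfix (ne_of_gt (hdpos L ⟨hLa, h'⟩))
      rwa [hLb] at hLt
    -- downward orbit tends to a
    have hdown : Tendsto (fun n : ℕ => (d⁻¹ ^ n) x₀) atTop (𝓝 a) := by
      have hmem : ∀ n : ℕ, (d⁻¹ ^ n) x₀ ∈ I := fun n => Pmaps _ (Ppow d⁻¹ (Pinv d hd) n) x₀ hx₀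
      obtain ⟨L, hLt, hLfix, hLle, hLB⟩ := tendsto_fix_of_anti d⁻¹ (Pcont d⁻¹ (Pinv d hd))
        (fun n => (d⁻¹ ^ n) x₀)
        (fun n => by show (d⁻¹ ^ (n+1)) x₀ = d⁻¹ ((d⁻¹ ^ n) x₀); rw [pow_succ']; rfl)
        (antitone_nat_of_succ_le (fun n => by
          rw [show ((d⁻¹ ^ (n+1)) x₀ : ℝ) = d⁻¹ ((d⁻¹ ^ n) x₀) by rw [pow_succ']; rfl]
          exact le_of_lt (hdinvneg _ (hmem n))))
        (B := a) (fun n => le_of_lt (hmem n).1)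
      have hLa : L = a := by
        rcases eq_or_lt_of_le hLB with h' | h'
        · exact h'.symm
        · exfalso
          have hLb : L < b := lt_of_le_of_lt (by simpa using hLle 0) (hmem 0).2
          exact absurd hLfix (ne_of_lt (hdinvneg L ⟨h', hLb⟩))
      rwa [hLa] at hLt
    have hex₀ : e x₀ ∈ I := Pmaps e he x₀ hx₀
    have hexist : ∃ z : ℤ, (d ^ z) x₀ ≤ e x₀ := by
      obtain ⟨n, hn⟩ := (hdown.eventually (eventually_lt_nhds hex₀.1)).exists
      refine ⟨-(n:ℤ), ?_⟩
      have : ((d ^ (-(n:ℤ))) x₀ : ℝ) = (d⁻¹ ^ n) x₀ := by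
        rw [zpow_neg, zpow_natCast, inv_pow]
      rw [this]
      exact le_of_lt hn
    have hbdd : ∃ N : ℤ, ∀ z : ℤ, (d ^ z) x₀ ≤ e x₀ → z ≤ N := by
      obtain ⟨N, hN⟩ := (hup.eventually (eventually_gt_nhds hex₀.2)).exists
      refine ⟨N, fun z hz => ?_⟩
      by_contra hc
      push_neg at hc
      have hmonoZ : StrictMono (fun n : ℤ => (d ^ n) x₀) := by
        apply strictMono_int_of_lt_succ
        intro n
        have hmem : ∀ k : ℤ, (d ^ k) x₀ ∈ I := fun k => Pmaps _ (Pzpow d hd k) x₀ hx₀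
        show (d ^ n) x₀ < (d ^ (n+1)) x₀
        rw [show ((d ^ (n+1)) x₀ : ℝ) = d ((d ^ n) x₀) by
          rw [add_comm, zpow_add, zpow_one]; rfl]
        exact hdpos _ (hmem n)
      have h1 : ((d ^ (N:ℤ)) x₀ : ℝ) < (d ^ z) x₀ := hmonoZ hc
      have h2 : ((d ^ (N:ℤ)) x₀ : ℝ) = (d ^ N) x₀ := by rw [zpow_natCast]
      rw [h2] at h1
      linarith
    obtain ⟨m, hm1, hm2⟩ := Int.exists_greatest_of_bdd hbdd hexist
    have hm2' : e x₀ < (d ^ (m+1)) x₀ := by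
      by_contra hc
      push_neg at hc
      have := hm2 (m+1) hc
      omega
    refine ⟨m, ?_, ?_⟩
    · rcases cmp (d ^ m) e (Pzpow d hd m) he with hc | hc | hc
      · exact fun x hx => le_of_eq (hc x hx)
      · exact fun x hx => le_of_lt (hc x hx)
      · exact absurd hm1 (not_le.2 (hc x₀ hx₀))
    · rcases cmp e (d ^ (m+1)) he (Pzpow d hd (m+1)) with hc | hc | hc
      · exact absurd (hc x₀ hx₀) (ne_of_lt hm2')
      · exact hc
      · exact absurd hm2' (not_lt.2 (le_of_lt (hc x₀ hx₀)))
  -- the key impossibility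
  have key : ∀ u v, P u → P v → ¬(∀ x ∈ I, x < (u * v * u⁻¹ * v⁻¹) x) := by
    intro u v hu hv hcpos
    set c := u * v * u⁻¹ * v⁻¹ with hcdef
    have hc : P c := Pmul _ _ (Pmul _ _ (Pmul _ _ hu hv) (Pinv _ hu)) (Pinv _ hv)
    have hcfactor : ∀ x : ℝ, c x = (u * v) ((v * u)⁻¹ x) := by
      intro x
      show (u * v * u⁻¹ * v⁻¹) x = (u * v) ((v * u)⁻¹ x)
      rw [mul_inv_rev]
      simp [mul_assoc]
    -- Claim 1 : c < d² for every positive d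
    have claim1 : ∀ d, P d → (∀ x ∈ I, x < d x) → ∀ x ∈ I, c x < d (d x) := by
      intro d hd hdpos x hx
      obtain ⟨m, hm1, hm2⟩ := arch d hd hdpos u hu
      obtain ⟨n, hn1, hn2⟩ := arch d hd hdpos v hv
      set t := (v * u)⁻¹ x with htdef
      have ht : t ∈ I := Pmaps _ (Pinv _ (Pmul _ _ hv hu)) x hx
      have hvt : v t ∈ I := Pmaps v hv t ht
      have hdmt : (d ^ m) t ∈ I := Pmaps _ (Pzpow d hd m) t ht
      have hub : c x < (d ^ (m+n+2)) t := by
        rw [hcfactor x, ← htdef]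
        show u (v t) < _
        calc u (v t) < (d ^ (m+1)) (v t) := hm2 _ hvt
        _ < (d ^ (m+1)) ((d ^ (n+1)) t) := Pmono _ (Pzpow d hd (m+1)) (hn2 t ht)
        _ = (d ^ (m+n+2)) t := by rw [hcompz]; ring_nf
      have hlb : (d ^ (m+n)) t ≤ x := by
        have h1 : ((d ^ m) t : ℝ) ≤ u t := hm1 t ht
        have h2 : ((d ^ n) ((d ^ m) t) : ℝ) ≤ v ((d ^ m) t) := hn1 _ hdmt
        have h3 : v ((d ^ m) t) ≤ v (u t) := (Pmono v hv).monotone h1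
        have h4 : v (u t) = x := by
          show v (u ((v * u)⁻¹ x)) = x
          rw [show (v * u)⁻¹ = u⁻¹ * v⁻¹ by rw [mul_inv_rev]]
          show v (u (u⁻¹ (v⁻¹ x))) = x
          rw [u.apply_inv_self, v.apply_inv_self]
        rw [hcompz] at h2
        calc ((d ^ (m+n)) t : ℝ) = (d ^ (n+m)) t := by ring_nf
        _ ≤ v ((d ^ m) t) := h2
        _ ≤ v (u t) := h3
        _ = x := h4
      have hfin : ((d ^ (m+n+2)) t : ℝ) ≤ d (d x) := by
        have h5 : ((d ^ (m+n+2)) t : ℝ) = (d ^ (2:ℤ)) ((d ^ (m+n)) t) := by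
          rw [hcompz]; ring_nf
        have h6 : ((d ^ (2:ℤ)) ((d ^ (m+n)) t) : ℝ) ≤ (d ^ (2:ℤ)) x :=
          (Pmono _ (Pzpow d hd 2)).monotone hlb
        have h7 : ((d ^ (2:ℤ)) x : ℝ) = d (d x) := by
          rw [show (2:ℤ) = 1 + 1 by norm_num, zpow_add, zpow_one]
          rfl
        linarith [h5, h6, h7]
      linarith [hub, hfin]
    by_cases hA : ∃ e, P e ∧ (∀ x ∈ I, x < e x) ∧ (∀ x ∈ I, e x < c x)
    · obtain ⟨e, he, hepos, helt⟩ := hA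
      set k := c * e⁻¹ with hkdef
      have hk : P k := Pmul _ _ hc (Pinv _ he)
      have hkpos : ∀ x ∈ I, x < k x := by
        intro x hx
        have hmem : e⁻¹ x ∈ I := Pmaps _ (Pinv _ he) x hx
        have h1 := helt _ hmem
        rw [e.apply_inv_self] at h1
        exact h1
      have hkc : ∀ x : ℝ, k (e x) = c x := by
        intro x
        show c (e⁻¹ (e x)) = c x
        rw [e.inv_apply_self]
      rcases cmp e k he hk with hcc | hcc | hcc
      · -- e = k: use d := e
        have hd2 : ∀ x ∈ I, e (e x) ≤ c x := by
          intro x hx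
          have hex : e x ∈ I := Pmaps e he x hx
          rw [hcc _ hex, hkc x]
        have := claim1 e he hepos x₀ hx₀
        linarith [hd2 x₀ hx₀]
      · -- e < k: use d := e
        have hd2 : ∀ x ∈ I, e (e x) ≤ c x := by
          intro x hx
          have hex : e x ∈ I := Pmaps e he x hx
          rw [← hkc x]
          exact le_of_lt (hcc _ hex)
        have := claim1 e he hepos x₀ hx₀
        linarith [hd2 x₀ hx₀]
      · -- k < e: use d := k
        have hd2 : ∀ x ∈ I, k (k x) ≤ c x := by
          intro x hx
          have h1 : k x < e x := hcc x hx
          have h2 := (Pmono k hk).monotone (le_of_lt h1)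
          rw [hkc x] at h2
          exact h2
        have := claim1 k hk hkpos x₀ hx₀
        linarith [hd2 x₀ hx₀]
    · -- no element strictly between identity and c
      push_neg at hA
      have hcle : ∀ e, P e → (∀ x ∈ I, x < e x) → ∀ x ∈ I, c x ≤ e x := by
        intro e he hepos
        rcases cmp e c he hc with hcc | hcc | hcc
        · exact fun x hx => le_of_eq (hcc x hx).symm
        · exfalso
          obtain ⟨y, hy, hylt⟩ := hA e he hepos
          exact absurd (hcc y hy) (not_lt.2 hylt)
        · exact fun x hx => le_of_lt (hcc x hx)
      -- both u and v coincide with powers of c on I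
      have hpoweq : ∀ w, P w → ∃ m : ℤ, ∀ x ∈ I, w x = (c ^ m) x := by
        intro w hw
        obtain ⟨m, hm1, hm2⟩ := arch c hc hcpos w hw
        set r := w * (c ^ m)⁻¹ with hrdef
        have hr : P r := Pmul _ _ hw (Pinv _ (Pzpow c hc m))
        have hrge : ∀ x ∈ I, x ≤ r x := by
          intro x hx
          have hs : (c ^ m)⁻¹ x ∈ I := Pmaps _ (Pinv _ (Pzpow c hc m)) x hx
          have h1 := hm1 _ hs
          rw [(c ^ m).apply_inv_self] at h1
          exact h1
        have hrlt : ∀ x ∈ I, r x < c x := by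
          intro x hx
          have hs : (c ^ m)⁻¹ x ∈ I := Pmaps _ (Pinv _ (Pzpow c hc m)) x hx
          have h1 := hm2 _ hs
          have h2 : ((c ^ (m+1)) ((c ^ m)⁻¹ x) : ℝ) = c x := by
            have e1 : ((c ^ m)⁻¹ : Equiv.Perm ℝ) = c ^ (-m) := by rw [zpow_neg]
            rw [e1, hcompz]
            have e2 : m + 1 + -m = 1 := by ring
            rw [e2, zpow_one]
          rw [h2] at h1
          exact h1
        rcases Ptri r hr with h' | h' | h'
        · refine ⟨m, fun x hx => ?_⟩
          have hs : (c ^ m) x ∈ I := Pmaps _ (Pzpow c hc m) x hx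
          have h1 := h' _ hs
          show w x = (c ^ m) x
          have h2 : r ((c ^ m) x) = w x := by
            show w ((c ^ m)⁻¹ ((c ^ m) x)) = w x
            rw [(c ^ m).inv_apply_self]
          rw [h2] at h1
          exact h1
        · exfalso
          have h1 := hcle r hr h' x₀ hx₀
          have h2 := hrlt x₀ hx₀
          linarith
        · exfalso
          have h1 := hrge x₀ hx₀
          have h2 := h' x₀ hx₀
          linarith
      obtain ⟨m, hmu⟩ := hpoweq u hu
      obtain ⟨n, hnv⟩ := hpoweq v hv
      -- compute c x₀ = x₀
      have hinvu : ∀ x ∈ I, u⁻¹ x = (c ^ m)⁻¹ x := by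
        intro x hx
        have hs : (c ^ m)⁻¹ x ∈ I := Pmaps _ (Pinv _ (Pzpow c hc m)) x hx
        have h1 := hmu _ hs
        rw [(c ^ m).apply_inv_self] at h1
        have h2 := congrArg (⇑u⁻¹) h1
        rw [u.inv_apply_self] at h2
        exact h2.symm
      have hinvv : ∀ x ∈ I, v⁻¹ x = (c ^ n)⁻¹ x := by
        intro x hx
        have hs : (c ^ n)⁻¹ x ∈ I := Pmaps _ (Pinv _ (Pzpow c hc n)) x hx
        have h1 := hnv _ hs
        rw [(c ^ n).apply_inv_self] at h1
        have h2 := congrArg (⇑v⁻¹) h1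
        rw [v.inv_apply_self] at h2
        exact h2.symm
      have ht1 : v⁻¹ x₀ ∈ I := Pmaps _ (Pinv _ hv) x₀ hx₀
      have ht2 : u⁻¹ (v⁻¹ x₀) ∈ I := Pmaps _ (Pinv _ hu) _ ht1
      have ht3 : v (u⁻¹ (v⁻¹ x₀)) ∈ I := Pmaps _ hv _ ht2
      have hcx₀ : c x₀ = x₀ := by
        have e0 : c x₀ = u (v (u⁻¹ (v⁻¹ x₀))) := rfl
        rw [e0, hmu _ ht3, hnv _ ht2, hinvu _ ht1, hinvv _ hx₀]
        rw [show ((c ^ m)⁻¹ : Equiv.Perm ℝ) = c ^ (-m) by rw [zpow_neg],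
          show ((c ^ n)⁻¹ : Equiv.Perm ℝ) = c ^ (-n) by rw [zpow_neg]]
        rw [hcompz, hcompz, hcompz]
        have hz : ∀ k : ℤ, k = 0 → (c ^ k) x₀ = x₀ := by rintro k rfl; rfl
        apply hz
        ring
      exact absurd hcx₀ (ne_of_gt (hcpos x₀ hx₀))
  -- conclude
  set c := f * h * f⁻¹ * h⁻¹ with hcdef
  have hc : P c := Pmul _ _ (Pmul _ _ (Pmul _ _ hf hh) (Pinv _ hf)) (Pinv _ hh)
  have hcid : ∀ x ∈ I, c x = x := by
    rcases Ptri c hc with h' | h' | h'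
    · exact h'
    · exact absurd h' (key f h hf hh)
    · exfalso
      apply key h f hh hf
      intro x hx
      have hcx : c⁻¹ x ∈ I := Pmaps _ (Pinv _ hc) x hx
      have h1 := h' _ hcx
      rw [c.apply_inv_self] at h1
      have e1 : (h * f * h⁻¹ * f⁻¹ : Equiv.Perm ℝ) = c⁻¹ := by
        rw [hcdef]
        simp [mul_assoc]
      rw [e1]
      exact h1
  intro x hx
  have h1 : h (f x) ∈ I := Pmaps _ hh _ (Pmaps _ hf _ hx)
  have h2 := hcid _ h1
  have e0 : c (h (f x)) = f (h x) := by
    show f (h (f⁻¹ (h⁻¹ (h (f x))))) = f (h x)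
    rw [h.inv_apply_self, f.inv_apply_self]
  rw [e0] at h2
  exact h2

lemma exists_fix_between' {e : Equiv.Perm ℝ} (he : Continuous ⇑e) {s t : ℝ} (hst : s < t)
    (hs : e s < s) (ht : t < e t) : ∃ r ∈ Ioo s t, e r = r := by
  have hcont : ContinuousOn (fun x => e x - x) (Icc s t) :=
    ((he.sub continuous_id).continuousOn)
  have h0 : (0:ℝ) ∈ Ioo (e s - s) (e t - t) := ⟨by linarith, by linarith⟩
  obtain ⟨r, hr, hr0⟩ := intermediate_value_Ioo (le_of_lt hst) hcont h0
  exact ⟨r, hr, by dsimp at hr0; linarith⟩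

lemma sign_const (e : Equiv.Perm ℝ) (he : Continuous ⇑e) {α q : ℝ}
    (hmov : ∀ x ∈ Ioo α q, e x ≠ x) :
    (∀ x ∈ Ioo α q, x < e x) ∨ (∀ x ∈ Ioo α q, e x < x) := by
  by_cases hex : ∃ x ∈ Ioo α q, x < e x
  · left
    obtain ⟨x, hx, hxe⟩ := hex
    intro y hy
    rcases lt_trichotomy y (e y) with h' | h' | h'
    · exact h'
    · exact absurd h'.symm (hmov y hy)
    · exfalso
      rcases lt_trichotomy x y with hxy | hxy | hxy
      · obtain ⟨r, hr, hrfix⟩ := exists_fix_between he hxy hxe h'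
        exact hmov r ⟨lt_trans hx.1 hr.1, lt_trans hr.2 hy.2⟩ hrfix
      · rw [hxy] at hxe; linarith
      · obtain ⟨r, hr, hrfix⟩ := exists_fix_between' he hxy h' hxe
        exact hmov r ⟨lt_trans hy.1 hr.1, lt_trans hr.2 hx.2⟩ hrfix
  · right
    push_neg at hex
    intro y hy
    exact lt_of_le_of_ne (hex y hy) (hmov y hy)

/-- extract the connected component of the complement of the fixed-point set -/
lemma exists_component (e : Equiv.Perm ℝ) (he : IsIcoDiff 2 e) {w : ℝ}
    (hw : w ∈ Ioo (0:ℝ) 1) (hew : e w ≠ w) :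
    ∃ α q, 0 ≤ α ∧ α < w ∧ w < q ∧ q ≤ 1 ∧ e α = α ∧ e q = q ∧
      ∀ x ∈ Ioo α q, e x ≠ x := by
  have hclosed : IsClosed {x : ℝ | e x = x} := isClosed_eq he.continuous continuous_id
  set A₁ := {x : ℝ | e x = x} ∩ Iic w with hA₁
  set A₂ := {x : ℝ | e x = x} ∩ Ici w with hA₂
  have h0 : (0:ℝ) ∈ A₁ := ⟨he.zero_fix, le_of_lt hw.1⟩
  have h1 : (1:ℝ) ∈ A₂ := ⟨he.one_fix, le_of_lt hw.2⟩
  have hA₁c : IsClosed A₁ := hclosed.inter isClosed_Iic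
  have hA₂c : IsClosed A₂ := hclosed.inter isClosed_Ici
  have hA₁b : BddAbove A₁ := ⟨w, fun t ht => ht.2⟩
  have hA₂b : BddBelow A₂ := ⟨w, fun t ht => ht.2⟩
  have hαm : sSup A₁ ∈ A₁ := hA₁c.csSup_mem ⟨0, h0⟩ hA₁b
  have hqm : sInf A₂ ∈ A₂ := hA₂c.csInf_mem ⟨1, h1⟩ hA₂b
  refine ⟨sSup A₁, sInf A₂, le_csSup hA₁b h0, ?_, ?_, csInf_le hA₂b h1,
    hαm.1, hqm.1, ?_⟩
  · exact lt_of_le_of_ne hαm.2 (fun hc => hew (hc ▸ hαm.1))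
  · exact lt_of_le_of_ne hqm.2 (fun hc => hew (by rw [hc]; exact hqm.1))
  · intro x hx hfix
    rcases le_or_gt x w with h' | h'
    · exact absurd (le_csSup hA₁b ⟨hfix, h'⟩) (not_le.2 hx.1)
    · exact absurd (csInf_le hA₂b ⟨hfix, le_of_lt h'⟩) (not_le.2 hx.2)

/-- Kopell wrapper choosing the contraction direction -/
lemma kopell_apply (e g : Equiv.Perm ℝ) (he : IsIcoDiff 2 e) (hg : IsIcoDiff 2 g)
    (hcomm : Commute e g) (α q p : ℝ) (hα : 0 ≤ α) (hq : q ≤ 1)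
    (heα : e α = α) (heq : e q = q) (hmov : ∀ x ∈ Ioo α q, e x ≠ x)
    (hp : p ∈ Ioo α q) (hgp : g p = p) : ∀ y ∈ Ioo α q, g y = y := by
  have hinvα : e⁻¹ α = α := by
    have h' : e⁻¹ (e α) = α := e.inv_apply_self α
    rwa [heα] at h'
  have hinvq : e⁻¹ q = q := by
    have h' : e⁻¹ (e q) = q := e.inv_apply_self q
    rwa [heq] at h'
  have hmapsinv : ∀ x ∈ Ioo α q, e⁻¹ x ∈ Ioo α q := by
    intro x hx
    have hsm : StrictMono ⇑(e⁻¹) := he.inv.strictMono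
    constructor
    · have := hsm hx.1; rwa [hinvα] at this
    · have := hsm hx.2; rwa [hinvq] at this
  rcases sign_const e he.continuous hmov with hpos | hneg
  · apply kopell e⁻¹ g he.inv hg hcomm.inv_left α q p hα hq hinvα hinvq ?_ hp hgp
    intro x hx
    have hs := hmapsinv x hx
    have h1 := hpos _ hs
    rwa [e.apply_inv_self] at h1
  · exact kopell e g he hg hcomm α q p hα hq heα heq hneg hp hgp

/-- Proposition 2.2: a nonabelian subgroup of Diff₊²([0,1)) with nonabelian centralizer
has a nonempty open interval in its fixed-point set. -/
theorem fix_contains_interval (G : Subgroup (Equiv.Perm ℝ))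
    (hG : ∀ g ∈ G, IsIcoDiff 2 g)
    (hGna : ∃ g₁ ∈ G, ∃ g₂ ∈ G, ¬Commute g₁ g₂)
    (hCna : ∃ h₁ h₂ : Equiv.Perm ℝ,
      (IsIcoDiff 2 h₁ ∧ ∀ g ∈ G, Commute g h₁) ∧
      (IsIcoDiff 2 h₂ ∧ ∀ g ∈ G, Commute g h₂) ∧ ¬Commute h₁ h₂) :
    ∃ a b : ℝ, a < b ∧ Set.Ioo a b ⊆ Set.Ico 0 1 ∧
      ∀ x ∈ Set.Ioo a b, ∀ g ∈ G, g x = x := by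
  obtain ⟨h₁, h₂, ⟨hd₁, hc₁⟩, ⟨hd₂, hc₂⟩, hnc⟩ := hCna
  by_contra hcon
  push_neg at hcon
  -- the common fixed-point set
  set F := {x : ℝ | ∀ g ∈ G, g x = x} with hFdef
  have hFclosed : IsClosed F := by
    have : F = ⋂ (g : Equiv.Perm ℝ) (_ : g ∈ G), {x : ℝ | g x = x} := by
      ext x; simp [hFdef]
    rw [this]
    exact isClosed_iInter (fun g => isClosed_iInter
      (fun hg => isClosed_eq (hG g hg).continuous continuous_id))
  have hF0 : (0:ℝ) ∈ F := fun g hg => (hG g hg).zero_fix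
  have hF1 : (1:ℝ) ∈ F := fun g hg => (hG g hg).one_fix
  -- centralizer elements preserve F
  have hFpres : ∀ e : Equiv.Perm ℝ, (∀ g ∈ G, Commute g e) → ∀ x ∈ F, e x ∈ F := by
    intro e hce x hx g hg
    have h' : g (e x) = e (g x) := by
      have := (hce g hg).eq
      calc g (e x) = (g * e) x := rfl
      _ = (e * g) x := by rw [this]
      _ = e (g x) := rfl
    rw [h', hx g hg]
  -- the commutator c
  set c := h₁ * h₂ * h₁⁻¹ * h₂⁻¹ with hcdef
  have hcdiff : IsIcoDiff 2 c := ((hd₁.mul hd₂).mul hd₁.inv).mul hd₂.inv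
  have hccomm : ∀ g ∈ G, Commute g c := fun g hg =>
    (((hc₁ g hg).mul_right (hc₂ g hg)).mul_right (hc₁ g hg).inv_right).mul_right
      (hc₂ g hg).inv_right
  have hcne : ∃ w₀, c w₀ ≠ w₀ := by
    by_contra hc'
    push_neg at hc'
    apply hnc
    have hone : h₁ * h₂ * h₁⁻¹ * h₂⁻¹ = 1 := Equiv.ext (fun x => hc' x)
    have h3 : h₁ * h₂ * h₁⁻¹ = h₂ := mul_inv_eq_one.1 hone
    have h4 : h₁ * h₂ = h₂ * h₁ := by
      have h5 := congrArg (· * h₁) h3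
      simpa [mul_assoc] using h5
    exact h4
  obtain ⟨w₀, hw₀⟩ := hcne
  have hw₀Ico : w₀ ∈ Ico (0:ℝ) 1 := by
    by_contra hc'
    exact hw₀ (hcdiff.outside hc')
  have hw₀pos : 0 < w₀ := by
    rcases eq_or_lt_of_le hw₀Ico.1 with h' | h'
    · exfalso; rw [← h'] at hw₀; exact hw₀ hcdiff.zero_fix
    · exact h'
  -- find a moved point not in F, using the density from hcon
  obtain ⟨w, hwIoo01, hcw, g₀, hg₀G, hg₀w⟩ :
      ∃ w, w ∈ Ioo (0:ℝ) 1 ∧ c w ≠ w ∧ ∃ g₀ ∈ G, g₀ w ≠ w := by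
    have hopen : IsOpen ({x : ℝ | c x = x}ᶜ ∩ Ioo 0 1) :=
      ((isClosed_eq hcdiff.continuous continuous_id).isOpen_compl).inter isOpen_Ioo
    have hw₀mem : w₀ ∈ {x : ℝ | c x = x}ᶜ ∩ Ioo 0 1 := ⟨hw₀, hw₀pos, hw₀Ico.2⟩
    obtain ⟨s, t, hst, hsub⟩ := mem_nhds_iff_exists_Ioo_subset.1 (hopen.mem_nhds hw₀mem)
    obtain ⟨x, hx, g₀, hg₀G, hg₀x⟩ := hcon s t (lt_trans hst.1 hst.2)
      (fun z hz => Ioo_subset_Ico_self (hsub hz).2)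
    exact ⟨x, (hsub hx).2, (hsub hx).1, g₀, hg₀G, hg₀x⟩
  have hwF : w ∉ F := fun hc' => hg₀w (hc' g₀ hg₀G)
  -- the component (a, b) of the complement of F containing w
  set A₁ := F ∩ Iic w with hA₁def
  set A₂ := F ∩ Ici w with hA₂def
  have h0A : (0:ℝ) ∈ A₁ := ⟨hF0, le_of_lt hwIoo01.1⟩
  have h1A : (1:ℝ) ∈ A₂ := ⟨hF1, le_of_lt hwIoo01.2⟩
  have hA₁c : IsClosed A₁ := hFclosed.inter isClosed_Iic
  have hA₂c : IsClosed A₂ := hFclosed.inter isClosed_Ici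
  have hA₁b : BddAbove A₁ := ⟨w, fun t ht => ht.2⟩
  have hA₂b : BddBelow A₂ := ⟨w, fun t ht => ht.2⟩
  set a := sSup A₁ with hadef
  set b := sInf A₂ with hbdef
  have haF : a ∈ F := (hA₁c.csSup_mem ⟨0, h0A⟩ hA₁b).1
  have hbF : b ∈ F := (hA₂c.csInf_mem ⟨1, h1A⟩ hA₂b).1
  have haw : a < w :=
    lt_of_le_of_ne (hA₁c.csSup_mem ⟨0, h0A⟩ hA₁b).2 (fun hc' => hwF (hc' ▸ haF))
  have hwb : w < b :=
    lt_of_le_of_ne (hA₂c.csInf_mem ⟨1, h1A⟩ hA₂b).2 (fun hc' => hwF (by rw [hc']; exact hbF))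
  have ha0 : 0 ≤ a := le_csSup hA₁b h0A
  have hb1 : b ≤ 1 := csInf_le hA₂b h1A
  have hab : a < b := lt_trans haw hwb
  have hIooF : ∀ x ∈ Ioo a b, x ∉ F := by
    intro x hx hxF
    rcases le_or_gt x w with h' | h'
    · exact absurd (le_csSup hA₁b ⟨hxF, h'⟩) (not_le.2 hx.1)
    · exact absurd (csInf_le hA₂b ⟨hxF, le_of_lt h'⟩) (not_le.2 hx.2)
  have hIoo01 : Ioo a b ⊆ Ioo (0:ℝ) 1 := fun x hx =>
    ⟨lt_of_le_of_lt ha0 hx.1, lt_of_lt_of_le hx.2 hb1⟩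
  have hwIoo : w ∈ Ioo a b := ⟨haw, hwb⟩
  -- any centralizer element fixes a and b
  have hfix_ab : ∀ e : Equiv.Perm ℝ, IsIcoDiff 2 e → (∀ g ∈ G, Commute g e) →
      e a = a ∧ e b = b := by
    intro e he hce
    have hceinv : ∀ g ∈ G, Commute g e⁻¹ := fun g hg => (hce g hg).inv_right
    by_contra hcon2
    have hout : ∀ x ∈ Ioo a b, e x ∉ Ioo a b := by
      intro x hx hex
      apply hcon2
      have hea_le : ∀ (e' : Equiv.Perm ℝ), IsIcoDiff 2 e' → (∀ g ∈ G, Commute g e') →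
          ∀ x' ∈ Ioo a b, e' x' ∈ Ioo a b → e' a ≤ a ∧ b ≤ e' b := by
        intro e' he' hce' x' hx' hex'
        constructor
        · have h1 : e' a ∈ F := hFpres e' hce' a haF
          by_contra hc'
          push_neg at hc'
          have h2 : e' a < b := lt_trans (he'.strictMono hx'.1) hex'.2
          exact hIooF _ ⟨hc', h2⟩ h1
        · have h1 : e' b ∈ F := hFpres e' hce' b hbF
          by_contra hc'
          push_neg at hc'
          have h2 : a < e' b := lt_trans hex'.1 (he'.strictMono hx'.2)
          exact hIooF _ ⟨h2, hc'⟩ h1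
      have h1 := hea_le e he hce x hx hex
      have hexinv : e⁻¹ (e x) ∈ Ioo a b := by rw [e.inv_apply_self]; exact hx
      have h2 := hea_le e⁻¹ he.inv hceinv (e x) hex hexinv
      constructor
      · have h3 : a ≤ e a := by
          have h4 := he.strictMono.monotone h2.1
          rwa [e.apply_inv_self] at h4
        exact le_antisymm h1.1 h3
      · have h3 : e b ≤ b := by
          have h4 := he.strictMono.monotone h2.2
          rwa [e.apply_inv_self] at h4
        exact le_antisymm h3 h1.2
    -- e moves every point of (a,b); in particular w is mapped off the interval
    have hmova : ∀ x ∈ Ioo a b, e x ≠ x := fun x hx hc' => hout x hx (by rw [hc']; exact hx)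
    have hewF : e w ∉ F := by
      intro hc'
      apply hwF
      have h1 := hFpres e⁻¹ hceinv (e w) hc'
      rwa [e.inv_apply_self] at h1
    have hew01 : e w ∈ Ioo (0:ℝ) 1 := by
      have h1 : e w ∈ Ico (0:ℝ) 1 := he.mapsTo (Ioo_subset_Ico_self (hIoo01 hwIoo))
      refine ⟨?_, h1.2⟩
      have h2 := he.strictMono hwIoo01.1
      rwa [he.zero_fix] at h2
    have hcases : e w < a ∨ b < e w := by
      rcases le_or_gt (e w) a with h' | h'
      · left
        exact lt_of_le_of_ne h' (fun hc' => hewF (hc' ▸ haF))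
      · right
        rcases le_or_gt b (e w) with h'' | h''
        · exact lt_of_le_of_ne h'' (fun hc' => hewF (by rw [← hc']; exact hbF))
        · exact absurd (hout w hwIoo ⟨h', h''⟩) (fun _ => hout w hwIoo ⟨h', h''⟩)
    -- build a component of Fix(e) and apply Kopell to every g ∈ G
    have hFw : False := by
      rcases hcases with hlt | hgt
      · -- e w < a : component around a
        have hapos : 0 < a := lt_trans hew01.1 hlt
        have hea : e a < a := lt_trans (he.strictMono haw) hlt
        set B₁ := {x : ℝ | e x = x} ∩ Iic a with hB₁def
        set B₂ := {x : ℝ | e x = x} ∩ Ici a with hB₂def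
        have hcl : IsClosed {x : ℝ | e x = x} := isClosed_eq he.continuous continuous_id
        have h0B : (0:ℝ) ∈ B₁ := ⟨he.zero_fix, le_of_lt hapos⟩
        have h1B : (1:ℝ) ∈ B₂ := ⟨he.one_fix, le_trans (le_of_lt hab) hb1⟩
        have hB₁b : BddAbove B₁ := ⟨a, fun t ht => ht.2⟩
        have hB₂b : BddBelow B₂ := ⟨a, fun t ht => ht.2⟩
        have hαm := (hcl.inter isClosed_Iic).csSup_mem ⟨0, h0B⟩ hB₁b
        have hqm := (hcl.inter isClosed_Ici).csInf_mem ⟨1, h1B⟩ hB₂b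
        set α₂ := sSup B₁ with hα₂def
        set q₂ := sInf B₂ with hq₂def
        have hα₂a : α₂ < a := lt_of_le_of_ne hαm.2 (fun hc' => absurd (show e a = a by rw [← hc']; exact hαm.1) (ne_of_lt hea))
        have hq₂b : b ≤ q₂ := by
          by_contra hc'
          push_neg at hc'
          have h1 : q₂ ∈ Ioo a b := ⟨lt_of_le_of_ne hqm.2 (fun hc'' => absurd (hc'' ▸ hqm.1) (ne_of_lt hea)), hc'⟩
          exact hmova _ h1 hqm.1
        have hmov2 : ∀ x ∈ Ioo α₂ q₂, e x ≠ x := by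
          intro x hx hfix
          rcases le_or_gt x a with h' | h'
          · exact absurd (le_csSup hB₁b ⟨hfix, h'⟩) (not_le.2 hx.1)
          · exact absurd (csInf_le hB₂b ⟨hfix, le_of_lt h'⟩) (not_le.2 hx.2)
        have haIoo : a ∈ Ioo α₂ q₂ := ⟨hα₂a, lt_of_lt_of_le hab hq₂b⟩
        have hwIn : w ∈ Ioo α₂ q₂ := ⟨lt_trans hα₂a haw, lt_of_lt_of_le hwb hq₂b⟩
        have hwFmem : w ∈ F := by
          intro g hg
          exact kopell_apply e g he (hG g hg) (hce g hg).symm α₂ q₂ a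
            (le_csSup hB₁b h0B) (csInf_le hB₂b h1B) hαm.1 hqm.1 hmov2 haIoo
            (haF g hg) w hwIn
        exact hwF hwFmem
      · -- b < e w : component around b
        have hb1' : b < 1 := lt_of_lt_of_le (lt_trans hgt hew01.2) (le_refl 1)
        have heb : b < e b := lt_trans hgt (he.strictMono hwb)
        set B₁ := {x : ℝ | e x = x} ∩ Iic b with hB₁def
        set B₂ := {x : ℝ | e x = x} ∩ Ici b with hB₂def
        have hcl : IsClosed {x : ℝ | e x = x} := isClosed_eq he.continuous continuous_id
        have h0B : (0:ℝ) ∈ B₁ := ⟨he.zero_fix, le_trans ha0 (le_of_lt hab)⟩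
        have h1B : (1:ℝ) ∈ B₂ := ⟨he.one_fix, hb1⟩
        have hB₁b : BddAbove B₁ := ⟨b, fun t ht => ht.2⟩
        have hB₂b : BddBelow B₂ := ⟨b, fun t ht => ht.2⟩
        have hαm := (hcl.inter isClosed_Iic).csSup_mem ⟨0, h0B⟩ hB₁b
        have hqm := (hcl.inter isClosed_Ici).csInf_mem ⟨1, h1B⟩ hB₂b
        set α₃ := sSup B₁ with hα₃def
        set q₃ := sInf B₂ with hq₃def
        have hα₃a : α₃ ≤ a := by
          by_contra hc'
          push_neg at hc'
          have h1 : α₃ < b := lt_of_le_of_ne hαm.2 (fun hc'' => absurd (hc'' ▸ hαm.1) (ne_of_gt heb))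
          exact hmova _ ⟨hc', h1⟩ hαm.1
        have hq₃b : b < q₃ := lt_of_le_of_ne hqm.2 (fun hc'' => absurd (by rw [hc'']; exact hqm.1) (ne_of_gt heb))
        have hmov2 : ∀ x ∈ Ioo α₃ q₃, e x ≠ x := by
          intro x hx hfix
          rcases le_or_gt x b with h' | h'
          · exact absurd (le_csSup hB₁b ⟨hfix, h'⟩) (not_le.2 hx.1)
          · exact absurd (csInf_le hB₂b ⟨hfix, le_of_lt h'⟩) (not_le.2 hx.2)
        have hbIoo : b ∈ Ioo α₃ q₃ := ⟨lt_of_le_of_lt hα₃a hab, hq₃b⟩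
        have hwIn : w ∈ Ioo α₃ q₃ := ⟨lt_of_le_of_lt hα₃a haw, lt_trans hwb hq₃b⟩
        have hwFmem : w ∈ F := by
          intro g hg
          exact kopell_apply e g he (hG g hg) (hce g hg).symm α₃ q₃ b
            (le_csSup hB₁b h0B) (csInf_le hB₂b h1B) hαm.1 hqm.1 hmov2 hbIoo
            (hbF g hg) w hwIn
        exact hwF hwFmem
    exact hFw
  -- the stabilizer predicate
  set P : Equiv.Perm ℝ → Prop :=
    fun e => IsIcoDiff 2 e ∧ (∀ g ∈ G, Commute g e) ∧ e a = a ∧ e b = b with hPdef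
  have Pmul : ∀ e₁ e₂, P e₁ → P e₂ → P (e₁ * e₂) := by
    rintro e₁ e₂ ⟨hd, hc, ha', hb'⟩ ⟨hd2, hc2, ha2, hb2⟩
    refine ⟨hd.mul hd2, fun g hg => (hc g hg).mul_right (hc2 g hg), ?_, ?_⟩
    · show e₁ (e₂ a) = a
      rw [ha2, ha']
    · show e₁ (e₂ b) = b
      rw [hb2, hb']
  have Pinv : ∀ e, P e → P e⁻¹ := by
    rintro e ⟨hd, hc, ha', hb'⟩
    refine ⟨hd.inv, fun g hg => (hc g hg).inv_right, ?_, ?_⟩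
    · have h' : e⁻¹ (e a) = a := e.inv_apply_self a
      rwa [ha'] at h'
    · have h' : e⁻¹ (e b) = b := e.inv_apply_self b
      rwa [hb'] at h'
  have Pmono : ∀ e, P e → StrictMono ⇑e := fun e hP => hP.1.strictMono
  have Pcont : ∀ e, P e → Continuous ⇑e := fun e hP => hP.1.continuous
  have Pmaps : ∀ e, P e → ∀ x ∈ Ioo a b, e x ∈ Ioo a b := by
    rintro e ⟨hd, hc, ha', hb'⟩ x hx
    constructor
    · have h' := hd.strictMono hx.1; rwa [ha'] at h'
    · have h' := hd.strictMono hx.2; rwa [hb'] at h'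
  -- freeness of the stabilizer action (via Kopell)
  have hPfree : ∀ e, P e → ∀ p' ∈ Ioo a b, e p' = p' → ∀ y ∈ Ioo a b, e y = y := by
    rintro e ⟨he, hce, hea, heb⟩ p' hp' hep' y hy
    by_contra hey
    have hcl : IsClosed {x : ℝ | e x = x} := isClosed_eq he.continuous continuous_id
    -- the nearest fixed point to y strictly between p' and y
    rcases lt_or_gt_of_ne (fun hc' : y = p' => hey (by rw [hc']; exact hep')) with hyp | hyp
    · -- y < p' : take the infimum of fixed points in [y, p']
      set B := {x : ℝ | e x = x} ∩ Icc y p' with hBdef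
      have hpB : p' ∈ B := ⟨hep', le_of_lt hyp, le_refl _⟩
      have hBb : BddBelow B := ⟨y, fun t ht => ht.2.1⟩
      have hβm := (hcl.inter isClosed_Icc).csInf_mem ⟨p', hpB⟩ hBb
      set β₀ := sInf B with hβ₀def
      have hyβ : y < β₀ := lt_of_le_of_ne hβm.2.1 (fun hc' => hey (by rw [hc']; exact hβm.1))
      have hβIoo : β₀ ∈ Ioo a b := ⟨lt_trans hy.1 hyβ, lt_of_le_of_lt hβm.2.2 hp'.2⟩
      obtain ⟨g₁, hg₁G, hg₁β⟩ : ∃ g₁ ∈ G, g₁ β₀ ≠ β₀ := by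
        have := hIooF β₀ hβIoo
        simpa [hFdef] using this
      obtain ⟨α₁, q₁, hα₁0, hα₁β, hβq₁, hq₁1, hgα₁, hgq₁, hmov₁⟩ :=
        exists_component g₁ (hG g₁ hg₁G) (hIoo01 hβIoo) hg₁β
      have heid : ∀ t ∈ Ioo α₁ q₁, e t = t :=
        kopell_apply g₁ e (hG g₁ hg₁G) he (hce g₁ hg₁G) α₁ q₁ β₀ hα₁0 hq₁1
          hgα₁ hgq₁ hmov₁ ⟨hα₁β, hβq₁⟩ hβm.1
      set z' := (max α₁ y + β₀) / 2 with hz'def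
      have hmaxβ : max α₁ y < β₀ := max_lt hα₁β hyβ
      have hz'1 : max α₁ y < z' := by rw [hz'def]; linarith
      have hz'2 : z' < β₀ := by rw [hz'def]; linarith
      have hz'fix : e z' = z' := heid z' ⟨lt_of_le_of_lt (le_max_left _ _) hz'1,
        lt_trans hz'2 hβq₁⟩
      have hz'B : z' ∈ B := ⟨hz'fix, le_of_lt (lt_of_le_of_lt (le_max_right _ _) hz'1),
        le_trans (le_of_lt hz'2) hβm.2.2⟩
      exact absurd (csInf_le hBb hz'B) (not_le.2 hz'2)
    · -- p' < y : take the supremum of fixed points in [p', y]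
      set B := {x : ℝ | e x = x} ∩ Icc p' y with hBdef
      have hpB : p' ∈ B := ⟨hep', le_refl _, le_of_lt hyp⟩
      have hBb : BddAbove B := ⟨y, fun t ht => ht.2.2⟩
      have hβm := (hcl.inter isClosed_Icc).csSup_mem ⟨p', hpB⟩ hBb
      set β₀ := sSup B with hβ₀def
      have hβy : β₀ < y := lt_of_le_of_ne hβm.2.2 (fun hc' => hey (by rw [← hc']; exact hβm.1))
      have hβIoo : β₀ ∈ Ioo a b := ⟨lt_of_lt_of_le hp'.1 hβm.2.1, lt_trans hβy hy.2⟩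
      obtain ⟨g₁, hg₁G, hg₁β⟩ : ∃ g₁ ∈ G, g₁ β₀ ≠ β₀ := by
        have := hIooF β₀ hβIoo
        simpa [hFdef] using this
      obtain ⟨α₁, q₁, hα₁0, hα₁β, hβq₁, hq₁1, hgα₁, hgq₁, hmov₁⟩ :=
        exists_component g₁ (hG g₁ hg₁G) (hIoo01 hβIoo) hg₁β
      have heid : ∀ t ∈ Ioo α₁ q₁, e t = t :=
        kopell_apply g₁ e (hG g₁ hg₁G) he (hce g₁ hg₁G) α₁ q₁ β₀ hα₁0 hq₁1
          hgα₁ hgq₁ hmov₁ ⟨hα₁β, hβq₁⟩ hβm.1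
      set z' := (β₀ + min q₁ y) / 2 with hz'def
      have hminβ : β₀ < min q₁ y := lt_min hβq₁ hβy
      have hz'1 : β₀ < z' := by rw [hz'def]; linarith
      have hz'2 : z' < min q₁ y := by rw [hz'def]; linarith
      have hz'fix : e z' = z' := heid z' ⟨lt_trans hα₁β hz'1,
        lt_of_lt_of_le hz'2 (min_le_left _ _)⟩
      have hz'B : z' ∈ B := ⟨hz'fix, le_trans hβm.2.1 (le_of_lt hz'1),
        le_of_lt (lt_of_lt_of_le hz'2 (min_le_right _ _))⟩
      exact absurd (le_csSup hBb hz'B) (not_le.2 hz'1)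
  have Ptri : ∀ e, P e → (∀ x ∈ Ioo a b, e x = x) ∨ (∀ x ∈ Ioo a b, x < e x) ∨
      (∀ x ∈ Ioo a b, e x < x) := by
    intro e hP
    by_cases hfix : ∃ p' ∈ Ioo a b, e p' = p'
    · obtain ⟨p', hp', hep'⟩ := hfix
      exact Or.inl (hPfree e hP p' hp' hep')
    · push_neg at hfix
      exact Or.inr (sign_const e (Pcont e hP) hfix)
  -- h₁, h₂ belong to P
  have hP₁ : P h₁ := ⟨hd₁, hc₁, (hfix_ab h₁ hd₁ hc₁).1, (hfix_ab h₁ hd₁ hc₁).2⟩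
  have hP₂ : P h₂ := ⟨hd₂, hc₂, (hfix_ab h₂ hd₂ hc₂).1, (hfix_ab h₂ hd₂ hc₂).2⟩
  have hcomm12 := holder_commute a b hab P Pmul Pinv Pmono Pcont Pmaps Ptri h₁ h₂ hP₁ hP₂
  -- conclude c w = w, contradiction
  apply hcw
  have hs1 : h₂⁻¹ w ∈ Ioo a b := Pmaps h₂⁻¹ (Pinv h₂ hP₂) w hwIoo
  have hs2 : h₁⁻¹ (h₂⁻¹ w) ∈ Ioo a b := Pmaps h₁⁻¹ (Pinv h₁ hP₁) _ hs1
  have e0 : c w = h₁ (h₂ (h₁⁻¹ (h₂⁻¹ w))) := rfl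
  rw [e0, hcomm12 _ hs2]
  rw [h₁.apply_inv_self, h₂.apply_inv_self]
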